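/- arXiv:1408.3962 — 5 statements merged into one kernel-verified Lean document; each statement's English description precedes it below -/
import Mathlib

section
/- Let O be a partial orientation of a connected multigraph with no directed cut (directed cocycle), and let e = {u,v} be an unoriented non-bridge edge. Then it is impossible that both orientations of e each create a directed cut: if orienting e one way yields a directed cut (X, X^c) and the other way yields a directed cut (Y, Y^c), then either (X ∩ Y, X^c ∪ Y^c) or (X ∩ Y^c, X^c ∪ Y) is already a directed cut of O, a contradiction. -/
open Classical

noncomputable section

/-- A finite multigraph, given by a finite vertex type, a finite edge type, and
two endpoint maps (which also provide a built-in reference direction for each edge). -/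
structure Multigraph where
  V : Type
  E : Type
  [fintypeV : Fintype V]
  [fintypeE : Fintype E]
  fst : E → V
  snd : E → V

attribute [instance] Multigraph.fintypeV Multigraph.fintypeE

namespace Multigraph

variable (G : Multigraph)

/-- Adjacency between vertices using only edges in `S`. -/
def adjOn (S : Set G.E) (u v : G.V) : Prop :=
  ∃ e ∈ S, (G.fst e = u ∧ G.snd e = v) ∨ (G.fst e = v ∧ G.snd e = u)

/-- Reachability (in the undirected sense) using only edges in `S`. -/
def reachOn (S : Set G.E) : G.V → G.V → Prop :=
  Relation.ReflTransGen (G.adjOn S)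

def Connected : Prop := ∀ u v : G.V, G.reachOn Set.univ u v

def IsLoop (e : G.E) : Prop := G.fst e = G.snd e

def IsBridge (e : G.E) : Prop := ¬ G.reachOn {f | f ≠ e} (G.fst e) (G.snd e)

/-- Number of connected components of the spanning subgraph with edge set `S`. -/
def comps (S : Set G.E) : ℕ := Nat.card (Quot (G.reachOn S))

/-- Rank of an edge set: `|V|` minus the number of components it spans. -/
def rk (S : Set G.E) : ℕ := Fintype.card G.V - G.comps S

/-- The Tutte polynomial, via the corank-nullity (subgraph) expansion. -/
def tutte (x y : ℚ) : ℚ :=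
  ∑ S : Finset G.E,
    (x - 1) ^ (G.rk Set.univ - G.rk (↑S : Set G.E)) * (y - 1) ^ (S.card - G.rk (↑S : Set G.E))

/-- The genus (cycle rank) `|E| - |V| + 1` of a connected multigraph. -/
def genus : ℕ := Fintype.card G.E + 1 - Fintype.card G.V

/-- A partial orientation: each edge is unoriented (`none`), oriented in the reference
direction `fst → snd` (`some true`), or oriented oppositely (`some false`). -/
abbrev PartialOrientation := G.E → Option Bool

/-- The tail of edge `e` traversed in direction `b` (`true` = `fst → snd`). -/
def dtail (e : G.E) (b : Bool) : G.V := if b then G.fst e else G.snd e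

/-- The head of edge `e` traversed in direction `b` (`true` = `fst → snd`). -/
def dhead (e : G.E) (b : Bool) : G.V := if b then G.snd e else G.fst e

/-- Directed adjacency under a partial orientation. -/
def dAdj (O : G.PartialOrientation) (u v : G.V) : Prop :=
  ∃ e b, O e = some b ∧ G.dtail e b = u ∧ G.dhead e b = v

/-- Directed reachability under a partial orientation. -/
def dReach (O : G.PartialOrientation) : G.V → G.V → Prop :=
  Relation.ReflTransGen (G.dAdj O)

/-- A partial orientation is acyclic iff it contains no directed cycle, equivalently there
is no oriented edge together with a directed path from its head back to its tail. -/
def Acyclic (O : G.PartialOrientation) : Prop :=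
  ¬ ∃ e b, O e = some b ∧ G.dReach O (G.dhead e b) (G.dtail e b)

/-- `e` crosses the cut determined by the vertex set `X`. -/
def crosses (X : Set G.V) (e : G.E) : Prop := ¬ ((G.fst e ∈ X) ↔ (G.snd e ∈ X))

/-- `(X, Xᶜ)` is a directed cut of `O`: the cut is nonempty and every crossing edge is
oriented from `X` to `Xᶜ`. -/
def IsDirCut (O : G.PartialOrientation) (X : Set G.V) : Prop :=
  (∃ e, G.crosses X e) ∧
  ∀ e, G.crosses X e →
    (G.fst e ∈ X → O e = some true) ∧ (G.snd e ∈ X → O e = some false)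

/-- A partial orientation is strongly connected iff it contains no directed cut. -/
def StronglyConnected (O : G.PartialOrientation) : Prop :=
  ¬ ∃ X, G.IsDirCut O X

/-- A directed cycle of `O`: a nonempty cyclically chained list of oriented steps using
pairwise distinct edges, each oriented in `O` as traversed. -/
def IsDCycle (O : G.PartialOrientation) (c : List (G.E × Bool)) : Prop :=
  c ≠ [] ∧ (∀ s ∈ c, O s.1 = some s.2) ∧
  List.Chain' (fun s t => G.dhead s.1 s.2 = G.dtail t.1 t.2) (c ++ c.take 1) ∧
  (c.map Prod.fst).Nodup

/-- A half-open path: a directed path (all steps but the last oriented in `O`) followed by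
an unoriented edge, imagined with the direction that would extend the path. -/
def IsHalfOpenPath (O : G.PartialOrientation) (p : List (G.E × Bool)) : Prop :=
  2 ≤ p.length ∧
  List.Chain' (fun s t => G.dhead s.1 s.2 = G.dtail t.1 t.2) p ∧
  (p.map Prod.fst).Nodup ∧
  (∀ s ∈ p.dropLast, O s.1 = some s.2) ∧
  ∀ h : p ≠ [], O (p.getLast h).1 = none

/-- `O'` is obtained from `O` by reversing one directed cut. -/
def cutRev (O O' : G.PartialOrientation) : Prop :=
  ∃ X, G.IsDirCut O X ∧ (∀ e, ¬ G.crosses X e → O' e = O e) ∧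
    (∀ e, G.crosses X e → O' e = (O e).map not)

/-- `O'` is obtained from `O` by reversing one directed cycle. -/
def cycleRev (O O' : G.PartialOrientation) : Prop :=
  ∃ c, G.IsDCycle O c ∧ (∀ e, e ∉ c.map Prod.fst → O' e = O e) ∧
    (∀ s ∈ c, O' s.1 = some (!s.2))

/-- `O'` is obtained from `O` by a Jacob's ladder cascade along a half-open path:
the first edge becomes unoriented and all other edges get the reversed direction. -/
def cascade (O O' : G.PartialOrientation) : Prop :=
  ∃ p, G.IsHalfOpenPath O p ∧ (∀ e, e ∉ p.map Prod.fst → O' e = O e) ∧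
    (∀ h : p ≠ [], O' (p.head h).1 = none) ∧
    (∀ s ∈ p.tail, O' s.1 = some (!s.2))

/-- An edge pivot at a vertex `v`: unorient an edge `e'` oriented into `v` and orient a
previously unoriented edge `e` toward `v`. -/
def pivot (O O' : G.PartialOrientation) : Prop :=
  ∃ e e' b b', e ≠ e' ∧ O e = none ∧ O e' = some b' ∧
    G.dhead e b = G.dhead e' b' ∧
    O' e = some b ∧ O' e' = none ∧ ∀ f, f ≠ e → f ≠ e' → O' f = O f

/-- A directed cut of `O` is minimal w.r.t. `(<, A)` if its `<`-minimum crossing edge is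
oriented as in the reference orientation `A`. -/
def MinimalCut [LinearOrder G.E] (A : G.E → Bool) (O : G.PartialOrientation)
    (X : Set G.V) : Prop :=
  ∃ e, G.crosses X e ∧ (∀ e', G.crosses X e' → e ≤ e') ∧ O e = some (A e)

/-- A partial orientation is cut minimal if every directed cut in it is minimal. -/
def CutMinimal [LinearOrder G.E] (A : G.E → Bool) (O : G.PartialOrientation) : Prop :=
  ∀ X, G.IsDirCut O X → G.MinimalCut A O X

/-- A list of steps is minimal w.r.t. `(<, A)` if its `<`-minimum edge is traversed in the
direction given by the reference orientation `A`. -/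
def MinimalSteps [LinearOrder G.E] (A : G.E → Bool) (c : List (G.E × Bool)) : Prop :=
  ∃ s ∈ c, (∀ t ∈ c, s.1 ≤ t.1) ∧ s.2 = A s.1

/-- A partial orientation is cycle minimal if every directed cycle in it is minimal. -/
def CycleMinimal [LinearOrder G.E] (A : G.E → Bool) (O : G.PartialOrientation) : Prop :=
  ∀ c, G.IsDCycle O c → G.MinimalSteps A c

/-- A partial orientation is cycle-path minimal if every directed cycle and every
half-open path in it is minimal. -/
def CyclePathMinimal [LinearOrder G.E] (A : G.E → Bool) (O : G.PartialOrientation) : Prop :=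
  G.CycleMinimal A O ∧ ∀ p, G.IsHalfOpenPath O p → G.MinimalSteps A p

/-- The indegree of a vertex: the number of edges oriented toward it. -/
def indeg (O : G.PartialOrientation) (v : G.V) : ℕ :=
  Nat.card {e : G.E // ∃ b, O e = some b ∧ G.dhead e b = v}

/-- Orient the (previously unoriented) edge `e` in direction `b`. -/
def orient (O : G.PartialOrientation) (e : G.E) (b : Bool) : G.PartialOrientation :=
  fun f => if f = e then some b else O f

/-- Deletion of the edge `e`. -/
def deleteEdge (e : G.E) : Multigraph where
  V := G.V
  E := {f : G.E // f ≠ e}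
  fintypeE := Subtype.fintype _
  fst := fun f => G.fst f.1
  snd := fun f => G.snd f.1

/-- Contraction of the edge `e`: identify its two endpoints and remove `e`. -/
def contractEdge (e : G.E) : Multigraph where
  V := Quot (fun a b => a = G.fst e ∧ b = G.snd e)
  E := {f : G.E // f ≠ e}
  fintypeV := Fintype.ofSurjective (Quot.mk _) (Quot.mk_surjective)
  fintypeE := Subtype.fintype _
  fst := fun f => Quot.mk _ (G.fst f.1)
  snd := fun f => Quot.mk _ (G.snd f.1)

/-- The number of acyclic partial orientations of `G`. -/
def numAcyclic : ℕ := Nat.card {O : G.PartialOrientation // G.Acyclic O}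

/-- The number of strongly connected partial orientations of `G`. -/
def numStrong : ℕ := Nat.card {O : G.PartialOrientation // G.StronglyConnected O}

end Multigraph

lemma aux_reach_mem_iff (G : Multigraph) {S : Set G.E} {Z : Set G.V}
    (hZ : ∀ f, ¬ G.crosses Z f) {u v : G.V} (h : G.reachOn S u v) : u ∈ Z ↔ v ∈ Z := by
  induction h with
  | refl => rfl
  | @tail b c _ hstep ih =>
    obtain ⟨f, _, hf⟩ := hstep
    have hfZ := hZ f
    unfold Multigraph.crosses at hfZ
    rw [ih]
    rcases hf with ⟨h1, h2⟩ | ⟨h1, h2⟩ <;> subst h1 <;> subst h2 <;> tauto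

lemma aux_reach_crosses (G : Multigraph) {S : Set G.E} {Z : Set G.V} {u v : G.V}
    (h : G.reachOn S u v) (hu : u ∈ Z) : v ∉ Z → ∃ f ∈ S, G.crosses Z f := by
  induction h with
  | refl => exact fun hv => absurd hu hv
  | @tail b c _ hstep ih =>
    intro hv
    by_cases hb : b ∈ Z
    · obtain ⟨f, hfS, hf⟩ := hstep
      refine ⟨f, hfS, ?_⟩
      unfold Multigraph.crosses
      rcases hf with ⟨h1, h2⟩ | ⟨h1, h2⟩ <;> subst h1 <;> subst h2 <;> tauto
    · exact ih hb

/-- in a strongly connected partial orientation of a connected multigraph,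
for an unoriented non-bridge edge it is impossible that both orientations of the edge
each create a directed cut. -/
theorem stmt1 (G : Multigraph) (hG : G.Connected) (O : G.PartialOrientation)
    (hsc : G.StronglyConnected O) (e : G.E) (he : O e = none) (hbr : ¬ G.IsBridge e) :
    ¬ (¬ G.StronglyConnected (G.orient O e true) ∧
       ¬ G.StronglyConnected (G.orient O e false)) := by
  rintro ⟨h1, h2⟩
  rw [Multigraph.StronglyConnected, not_not] at h1 h2
  obtain ⟨X, ⟨fX, hfX⟩, hX⟩ := h1
  obtain ⟨Y, ⟨fY, hfY⟩, hY⟩ := h2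
  -- e crosses X, with fst e ∈ X, snd e ∉ X
  have heX : G.crosses X e := by
    by_contra hc
    apply hsc
    refine ⟨X, ⟨fX, hfX⟩, fun f hf => ?_⟩
    have hfe : f ≠ e := fun h => hc (h ▸ hf)
    have := hX f hf
    simpa [Multigraph.orient, hfe] using this
  have heXt : G.fst e ∈ X ∧ G.snd e ∉ X := by
    have h := hX e heX
    unfold Multigraph.crosses at heX
    by_cases h1 : G.fst e ∈ X
    · refine ⟨h1, fun h2 => ?_⟩
      have := h.2 h2
      simp [Multigraph.orient] at this
    · exfalso
      have h2 : G.snd e ∈ X := by tauto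
      have := h.2 h2
      simp [Multigraph.orient] at this
  -- e crosses Y, with fst e ∉ Y, snd e ∈ Y
  have heY : G.crosses Y e := by
    by_contra hc
    apply hsc
    refine ⟨Y, ⟨fY, hfY⟩, fun f hf => ?_⟩
    have hfe : f ≠ e := fun h => hc (h ▸ hf)
    have := hY f hf
    simpa [Multigraph.orient, hfe] using this
  have heYt : G.fst e ∉ Y ∧ G.snd e ∈ Y := by
    have h := hY e heY
    unfold Multigraph.crosses at heY
    by_cases h1 : G.fst e ∈ Y
    · exfalso
      have := h.1 h1
      simp [Multigraph.orient] at this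
    · refine ⟨h1, by tauto⟩
  -- no edge crosses X ∩ Y
  have hXY : ∀ f, ¬ G.crosses (X ∩ Y) f := by
    intro f hf
    apply hsc
    refine ⟨X ∩ Y, ⟨f, hf⟩, fun g hg => ?_⟩
    have hge : g ≠ e := by
      intro h; subst h
      unfold Multigraph.crosses at hg
      simp only [Set.mem_inter_iff] at hg
      tauto
    unfold Multigraph.crosses at hg
    simp only [Set.mem_inter_iff] at hg
    constructor
    · rintro ⟨hx, hy⟩
      by_cases hsx : G.snd g ∈ X
      · have hcY : G.crosses Y g := by unfold Multigraph.crosses; tauto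
        have := (hY g hcY).1 hy
        simpa [Multigraph.orient, hge] using this
      · have hcX : G.crosses X g := by unfold Multigraph.crosses; tauto
        have := (hX g hcX).1 hx
        simpa [Multigraph.orient, hge] using this
    · rintro ⟨hx, hy⟩
      by_cases hsx : G.fst g ∈ X
      · have hcY : G.crosses Y g := by unfold Multigraph.crosses; tauto
        have := (hY g hcY).2 hy
        simpa [Multigraph.orient, hge] using this
      · have hcX : G.crosses X g := by unfold Multigraph.crosses; tauto
        have := (hX g hcX).2 hx
        simpa [Multigraph.orient, hge] using this
  -- no edge crosses X ∪ Y
  have hXuY : ∀ f, ¬ G.crosses (X ∪ Y) f := by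
    intro f hf
    apply hsc
    refine ⟨X ∪ Y, ⟨f, hf⟩, fun g hg => ?_⟩
    have hge : g ≠ e := by
      intro h; subst h
      unfold Multigraph.crosses at hg
      simp only [Set.mem_union] at hg
      tauto
    unfold Multigraph.crosses at hg
    simp only [Set.mem_union] at hg
    constructor
    · rintro (hx | hy)
      · have hcX : G.crosses X g := by unfold Multigraph.crosses; tauto
        have := (hX g hcX).1 hx
        simpa [Multigraph.orient, hge] using this
      · have hcY : G.crosses Y g := by unfold Multigraph.crosses; tauto
        have := (hY g hcY).1 hy
        simpa [Multigraph.orient, hge] using this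
    · rintro (hx | hy)
      · have hcX : G.crosses X g := by unfold Multigraph.crosses; tauto
        have := (hX g hcX).2 hx
        simpa [Multigraph.orient, hge] using this
      · have hcY : G.crosses Y g := by unfold Multigraph.crosses; tauto
        have := (hY g hcY).2 hy
        simpa [Multigraph.orient, hge] using this
  -- hence X ∪ Y = univ and X ∩ Y = ∅, i.e. Y = Xᶜ pointwise
  have hU : ∀ v, v ∈ X ∪ Y := fun v =>
    (aux_reach_mem_iff G hXuY (hG (G.fst e) v)).mp (Or.inl heXt.1)
  have hI : ∀ v, v ∉ X ∩ Y := fun v h =>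
    heYt.1 ((aux_reach_mem_iff G hXY (hG v (G.fst e))).mp h).2
  have hYc : ∀ v, v ∈ Y ↔ v ∉ X := by
    intro v
    have := hU v
    have := hI v
    simp only [Set.mem_union, Set.mem_inter_iff] at *
    tauto
  -- e is not a bridge: find another edge crossing X, and derive a contradiction
  unfold Multigraph.IsBridge at hbr
  rw [not_not] at hbr
  obtain ⟨f, hfS, hfX'⟩ := aux_reach_crosses G hbr heXt.1 heXt.2
  have hfe : f ≠ e := hfS
  unfold Multigraph.crosses at hfX'
  by_cases hx : G.fst f ∈ X
  · have h1 := (hX f (by unfold Multigraph.crosses; tauto)).1 hx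
    have hsy : G.snd f ∈ Y := (hYc _).mpr (by tauto)
    have h2 := (hY f (by unfold Multigraph.crosses; rw [hYc, hYc]; tauto)).2 hsy
    simp only [Multigraph.orient, if_neg hfe] at h1 h2
    rw [h1] at h2
    simp at h2
  · have hsx : G.snd f ∈ X := by tauto
    have h1 := (hX f (by unfold Multigraph.crosses; tauto)).2 hsx
    have hfy : G.fst f ∈ Y := (hYc _).mpr hx
    have h2 := (hY f (by unfold Multigraph.crosses; rw [hYc, hYc]; tauto)).1 hfy
    simp only [Multigraph.orient, if_neg hfe] at h1 h2
    rw [h1] at h2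
    simp at h2
end
end

section
/- Let f(G) denote the number of acyclic partial orientations of a connected multigraph G. Then for any non-loop edge e, f(G) = 2·f(G \ e) + f(G/e); if e is a bridge, f(G) = 3·f(G/e); and if e is a loop, f(G) = f(G \ e). -/
open Classical

noncomputable section

namespace Multigraph

variable (G : Multigraph)

section DelContr

variable (e : G.E)

/-- restriction of an orientation to the deleted graph -/
def res (O : G.PartialOrientation) : (G.deleteEdge e).PartialOrientation :=
  fun f => O f.1

/-- extension of an orientation of the deleted graph, leaving `e` unoriented -/
def ext (O' : (G.deleteEdge e).PartialOrientation) : G.PartialOrientation :=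
  fun f => if h : f = e then none else O' ⟨f, h⟩

theorem dtail_delete (f : (G.deleteEdge e).E) (b : Bool) :
    (G.deleteEdge e).dtail f b = G.dtail f.1 b := by cases b <;> rfl

theorem dhead_delete (f : (G.deleteEdge e).E) (b : Bool) :
    (G.deleteEdge e).dhead f b = G.dhead f.1 b := by cases b <;> rfl

theorem dAdj_res {O : G.PartialOrientation} (hO : O e = none) {u v : G.V} :
    (G.deleteEdge e).dAdj (G.res e O) u v ↔ G.dAdj O u v := by
  constructor
  · rintro ⟨f, b, hf, ht, hh⟩
    exact ⟨f.1, b, hf, by rw [← dtail_delete]; exact ht, by rw [← dhead_delete]; exact hh⟩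
  · rintro ⟨f, b, hf, ht, hh⟩
    have hne : f ≠ e := by rintro rfl; rw [hO] at hf; exact nomatch hf
    exact ⟨⟨f, hne⟩, b, hf, (dtail_delete G e ⟨f, hne⟩ b).trans ht, (dhead_delete G e ⟨f, hne⟩ b).trans hh⟩

theorem dReach_res {O : G.PartialOrientation} (hO : O e = none) {u v : G.V} :
    (G.deleteEdge e).dReach (G.res e O) u v ↔ G.dReach O u v := by
  constructor
  · exact Relation.ReflTransGen.mono (fun a b h => (G.dAdj_res e hO).1 h) _ _
  · exact Relation.ReflTransGen.mono (fun a b h => (G.dAdj_res e hO).2 h) _ _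

theorem acyclic_res {O : G.PartialOrientation} (hO : O e = none) :
    (G.deleteEdge e).Acyclic (G.res e O) ↔ G.Acyclic O := by
  unfold Acyclic
  constructor
  · rintro h ⟨f, b, hf, hr⟩
    have hne : f ≠ e := by rintro rfl; rw [hO] at hf; exact nomatch hf
    exact h ⟨⟨f, hne⟩, b, hf, by
      exact (dReach_res G e hO).2 hr⟩
  · rintro h ⟨f, b, hf, hr⟩
    refine h ⟨f.1, b, hf, ?_⟩
    rw [dhead_delete, dtail_delete, dReach_res G e hO] at hr; exact hr



theorem dReach_orient {O : G.PartialOrientation} (hO : O e = none) (b : Bool) {u v : G.V} :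
    G.dReach (G.orient O e b) u v ↔
      G.dReach O u v ∨ (G.dReach O u (G.dtail e b) ∧ G.dReach O (G.dhead e b) v) := by
  constructor
  · intro h
    induction h using Relation.ReflTransGen.head_induction_on with
    | refl => exact Or.inl Relation.ReflTransGen.refl
    | head h' _ ih =>
      obtain ⟨f, b', hf, ht, hh⟩ := h'
      by_cases hfe : f = e
      · subst hfe
        have hb : b' = b := by
          simp [orient] at hf; exact hf.symm
        subst hb
        rcases ih with h1 | ⟨h1, h2⟩
        · exact Or.inr ⟨ht ▸ Relation.ReflTransGen.refl, hh ▸ h1⟩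
        · exact Or.inr ⟨ht ▸ Relation.ReflTransGen.refl, h2⟩
      · have hfO : O f = some b' := by simpa [orient, hfe] using hf
        have step : G.dAdj O _ _ := ⟨f, b', hfO, ht, hh⟩
        rcases ih with h1 | ⟨h1, h2⟩
        · exact Or.inl (Relation.ReflTransGen.head step h1)
        · exact Or.inr ⟨Relation.ReflTransGen.head step h1, h2⟩
  · have mono : ∀ {x y : G.V}, G.dReach O x y → G.dReach (G.orient O e b) x y := by
      intro x y h
      refine Relation.ReflTransGen.mono ?_ _ _ h
      rintro a c ⟨f, b', hf, ht, hh⟩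
      have hfe : f ≠ e := by rintro rfl; rw [hO] at hf; exact nomatch hf
      exact ⟨f, b', by simpa [orient, hfe] using hf, ht, hh⟩
    rintro (h | ⟨h1, h2⟩)
    · exact mono h
    · have step : G.dAdj (G.orient O e b) (G.dtail e b) (G.dhead e b) :=
        ⟨e, b, by simp [orient], rfl, rfl⟩
      exact (mono h1).trans (Relation.ReflTransGen.head step (mono h2))

theorem acyclic_orient {O : G.PartialOrientation} (hO : O e = none) (b : Bool) :
    G.Acyclic (G.orient O e b) ↔
      G.Acyclic O ∧ ¬ G.dReach O (G.dhead e b) (G.dtail e b) := by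
  constructor
  · intro h
    constructor
    · rintro ⟨f, b', hf, hr⟩
      have hfe : f ≠ e := by rintro rfl; rw [hO] at hf; exact nomatch hf
      refine h ⟨f, b', by simpa [orient, hfe] using hf, ?_⟩
      rw [dReach_orient G e hO b]
      exact Or.inl hr
    · intro hr
      refine h ⟨e, b, by simp [orient], ?_⟩
      rw [dReach_orient G e hO b]
      exact Or.inl hr
  · rintro ⟨hA, hr⟩ ⟨f, b', hf, hreach⟩
    rw [dReach_orient G e hO b] at hreach
    by_cases hfe : f = e
    · subst hfe
      have hb : b' = b := by
        simp [orient] at hf; exact hf.symm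
      subst hb
      rcases hreach with h1 | ⟨h1, h2⟩
      · exact hr h1
      · exact hr h1
    · have hfO : O f = some b' := by simpa [orient, hfe] using hf
      rcases hreach with h1 | ⟨h1, h2⟩
      · exact hA ⟨f, b', hfO, h1⟩
      · have step : G.dAdj O (G.dtail f b') (G.dhead f b') := ⟨f, b', hfO, rfl, rfl⟩
        exact hr (h2.trans (Relation.ReflTransGen.head step h1))

theorem not_two_way {O : G.PartialOrientation} (hA : G.Acyclic O) {u v : G.V}
    (huv : u ≠ v) (h1 : G.dReach O u v) (h2 : G.dReach O v u) : False := by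
  rcases Relation.ReflTransGen.cases_head h1 with h | ⟨w, ⟨f, b, hf, ht, hh⟩, hr⟩
  · exact huv h
  · exact hA ⟨f, b, hf, hh ▸ (hr.trans h2).trans (ht ▸ Relation.ReflTransGen.refl)⟩



/-- canonical representative map for the contraction quotient -/
def cmap : G.V → G.V := fun v => if v = G.snd e then G.fst e else v

theorem quot_eq_iff (a b : G.V) :
    (Quot.mk (fun a b => a = G.fst e ∧ b = G.snd e) a
      = Quot.mk (fun a b => a = G.fst e ∧ b = G.snd e) b) ↔ G.cmap e a = G.cmap e b := by
  constructor
  · intro h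
    have : ∀ x y, (x = G.fst e ∧ y = G.snd e) → G.cmap e x = G.cmap e y := by
      rintro x y ⟨rfl, rfl⟩
      simp only [cmap]
      split_ifs with h1 h2 <;> simp_all
    exact congrArg (Quot.lift (G.cmap e) this) h
  · intro h
    have base : Quot.mk (fun a b => a = G.fst e ∧ b = G.snd e) (G.fst e)
        = Quot.mk (fun a b => a = G.fst e ∧ b = G.snd e) (G.snd e) :=
      Quot.sound ⟨rfl, rfl⟩
    simp only [cmap] at h
    split_ifs at h with h1 h2 h2
    · subst h1; rw [h2]
    · subst h1; subst h; exact base.symm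
    · subst h2; subst h; exact base
    · rw [h]

theorem dtail_contract (f : (G.contractEdge e).E) (b : Bool) :
    (G.contractEdge e).dtail f b = Quot.mk _ (G.dtail f.1 b) := by cases b <;> rfl

theorem dhead_contract (f : (G.contractEdge e).E) (b : Bool) :
    (G.contractEdge e).dhead f b = Quot.mk _ (G.dhead f.1 b) := by cases b <;> rfl

/-- the "teleporting" relation on the original vertices -/
def crel (O' : (G.deleteEdge e).PartialOrientation) (u v : G.V) : Prop :=
  (G.deleteEdge e).dAdj O' u v ∨ G.cmap e u = G.cmap e v

theorem dReach_contract (O' : (G.deleteEdge e).PartialOrientation) (u v : G.V) :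
    (G.contractEdge e).dReach O' (Quot.mk _ u) (Quot.mk _ v) ↔
      Relation.ReflTransGen (G.crel e O') u v := by
  constructor
  · intro h
    have key : ∀ x y, (G.contractEdge e).dReach O' x y →
        ∀ a b : G.V, x = Quot.mk _ a → y = Quot.mk _ b →
          Relation.ReflTransGen (G.crel e O') a b := by
      intro x y h
      induction h using Relation.ReflTransGen.head_induction_on with
      | refl =>
        intro a b ha hb
        refine Relation.ReflTransGen.single (Or.inr ?_)
        rw [← quot_eq_iff, ← ha, ← hb]
      | head h' _ ih =>
        intro a b ha hb
        obtain ⟨f, b', hf, ht, hh⟩ := h'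
        rw [dtail_contract] at ht
        rw [dhead_contract] at hh
        have s1 : G.crel e O' a (G.dtail f.1 b') := Or.inr (by
          rw [← quot_eq_iff, ht, ha])
        have s2 : G.crel e O' (G.dtail f.1 b') (G.dhead f.1 b') := Or.inl
          ⟨f, b', hf, (dtail_delete G e f b'), (dhead_delete G e f b')⟩
        have := ih (G.dhead f.1 b') b hh.symm hb
        exact Relation.ReflTransGen.head s1 (Relation.ReflTransGen.head s2 this)
    exact key _ _ h u v rfl rfl
  · intro h
    induction h with
    | refl => exact Relation.ReflTransGen.refl
    | tail _ h2 ih =>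
      rcases h2 with h2 | h2
      · obtain ⟨f, b', hf, ht, hh⟩ := h2
        refine ih.tail ⟨f, b', hf, ?_, ?_⟩
        · exact (G.dtail_contract e f b').trans (congrArg (Quot.mk _) ((G.dtail_delete e f b').symm.trans ht))
        · exact (G.dhead_contract e f b').trans (congrArg (Quot.mk _) ((G.dhead_delete e f b').symm.trans hh))
      · rw [← quot_eq_iff] at h2
        rw [← h2]
        exact ih

theorem acyclic_contract (hfs : G.fst e ≠ G.snd e) (O' : (G.deleteEdge e).PartialOrientation) :
    (G.contractEdge e).Acyclic O' ↔
      (G.deleteEdge e).Acyclic O' ∧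
        ¬ (G.deleteEdge e).dReach O' (G.fst e) (G.snd e) ∧
        ¬ (G.deleteEdge e).dReach O' (G.snd e) (G.fst e) := by
  have msf : G.cmap e (G.snd e) = G.cmap e (G.fst e) := by
    simp only [cmap]; split_ifs with h1 h2 <;> simp_all
  have mono : ∀ {x y : G.V}, (G.deleteEdge e).dReach O' x y →
      Relation.ReflTransGen (G.crel e O') x y :=
    fun h => Relation.ReflTransGen.mono (fun a b hh => Or.inl hh) _ _ h
  constructor
  · intro h
    refine ⟨?_, ?_, ?_⟩
    · rintro ⟨f, b, hf, hr⟩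
      refine h ⟨f, b, hf, ?_⟩
      rw [dhead_contract G e f b, dtail_contract G e f b, dReach_contract]
      exact mono hr
    · intro hr
      rcases Relation.ReflTransGen.cases_head hr with heq | ⟨w, ⟨f, b, hf, ht, hh⟩, hr2⟩
      · exact hfs heq
      · refine h ⟨f, b, hf, ?_⟩
        rw [dhead_contract G e f b, dtail_contract G e f b, dReach_contract,
          ← dhead_delete G e f b, ← dtail_delete G e f b, hh, ht]
        exact (mono hr2).tail (Or.inr msf)
    · intro hr
      rcases Relation.ReflTransGen.cases_head hr with heq | ⟨w, ⟨f, b, hf, ht, hh⟩, hr2⟩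
      · exact hfs heq.symm
      · refine h ⟨f, b, hf, ?_⟩
        rw [dhead_contract G e f b, dtail_contract G e f b, dReach_contract,
          ← dhead_delete G e f b, ← dtail_delete G e f b, hh, ht]
        exact (mono hr2).tail (Or.inr msf.symm)
  · rintro ⟨hA, hr1, hr2⟩ ⟨f, b, hf, hr⟩
    rw [dhead_contract, dtail_contract, dReach_contract] at hr
    -- collapse lemma
    have collapse : ∀ {u v : G.V}, Relation.ReflTransGen (G.crel e O') u v →
        (G.deleteEdge e).dReach O' u v ∨
          (((G.deleteEdge e).dReach O' u (G.fst e) ∨ (G.deleteEdge e).dReach O' u (G.snd e)) ∧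
           ((G.deleteEdge e).dReach O' (G.fst e) v ∨ (G.deleteEdge e).dReach O' (G.snd e) v)) := by
      intro u v h
      induction h with
      | refl => exact Or.inl Relation.ReflTransGen.refl
      | tail _ h2 ih =>
        rcases h2 with h2 | h2
        · rcases ih with ih | ⟨ihl, ihr⟩
          · exact Or.inl (ih.tail h2)
          · refine Or.inr ⟨ihl, ?_⟩
            rcases ihr with hh | hh
            · exact Or.inl (hh.tail h2)
            · exact Or.inr (hh.tail h2)
        · -- cmap _ = cmap _ : either equal or both endpoints of e
          rename_i w v' _
          simp only [cmap] at h2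
          by_cases hwv : w = v'
          · subst hwv; exact ih
          have hmem : (w = G.fst e ∨ w = G.snd e) ∧ (v' = G.fst e ∨ v' = G.snd e) := by
            split_ifs at h2 with ha hb hb
            · exact ⟨Or.inr ha, Or.inr hb⟩
            · exact ⟨Or.inr ha, Or.inl h2.symm⟩
            · exact ⟨Or.inl h2, Or.inr hb⟩
            · exact absurd h2 hwv
          obtain ⟨hw, hv⟩ := hmem
          have toW : (G.deleteEdge e).dReach O' w (G.fst e) ∨
              (G.deleteEdge e).dReach O' w (G.snd e) := by
            rcases hw with rfl | rfl
            · exact Or.inl Relation.ReflTransGen.refl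
            · exact Or.inr Relation.ReflTransGen.refl
          have fromV : (G.deleteEdge e).dReach O' (G.fst e) v' ∨
              (G.deleteEdge e).dReach O' (G.snd e) v' := by
            rcases hv with rfl | rfl
            · exact Or.inl Relation.ReflTransGen.refl
            · exact Or.inr Relation.ReflTransGen.refl
          rcases ih with ih | ⟨ihl, ihr⟩
          · refine Or.inr ⟨?_, fromV⟩
            rcases toW with hh | hh
            · exact Or.inl (ih.trans hh)
            · exact Or.inr (ih.trans hh)
          · exact Or.inr ⟨ihl, fromV⟩
    have step : (G.deleteEdge e).dAdj O' ((G.deleteEdge e).dtail f b)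
        ((G.deleteEdge e).dhead f b) := ⟨f, b, hf, rfl, rfl⟩
    rw [dtail_delete G e f b, dhead_delete G e f b] at step
    rcases collapse hr with h | ⟨hl, hrr⟩
    · exact hA ⟨f, b, hf, by rw [dhead_delete G e f b, dtail_delete G e f b]; exact h⟩
    · rcases hl with hl | hl <;> rcases hrr with hrr | hrr
      · exact hA ⟨f, b, hf, by rw [dhead_delete G e f b, dtail_delete G e f b]; exact hl.trans hrr⟩
      · exact hr2 ((hrr.tail step).trans hl)
      · exact hr1 ((hrr.tail step).trans hl)
      · exact hA ⟨f, b, hf, by rw [dhead_delete G e f b, dtail_delete G e f b]; exact hl.trans hrr⟩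



theorem card_split :
    G.numAcyclic
      = Nat.card {O : G.PartialOrientation // G.Acyclic O ∧ O e = none}
      + Nat.card {O : G.PartialOrientation // G.Acyclic O ∧ O e = some true}
      + Nat.card {O : G.PartialOrientation // G.Acyclic O ∧ O e = some false} := by
  classical
  let eqv : {O : G.PartialOrientation // G.Acyclic O}
      ≃ Σ x : Option Bool, {O : G.PartialOrientation // G.Acyclic O ∧ O e = x} :=
    { toFun := fun O => ⟨O.1 e, O.1, O.2, rfl⟩
      invFun := fun s => ⟨s.2.1, s.2.2.1⟩
      left_inv := fun _ => rfl
      right_inv := by rintro ⟨x, O, hP, rfl⟩; rfl }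
  rw [numAcyclic, Nat.card_congr eqv, Nat.card_eq_fintype_card, Fintype.card_sigma,
    Fintype.sum_option, Fintype.sum_bool]
  simp only [Nat.card_eq_fintype_card]
  ring

theorem ext_none : G.ext e O' e = none := by simp [ext]

theorem res_ext (O' : (G.deleteEdge e).PartialOrientation) :
    G.res e (G.ext e O') = O' := by
  funext f; simp [res, ext, f.2]; rfl

theorem card_none :
    Nat.card {O : G.PartialOrientation // G.Acyclic O ∧ O e = none}
      = (G.deleteEdge e).numAcyclic := by
  refine Nat.card_congr
    { toFun := fun O => ⟨G.res e O.1, (G.acyclic_res e O.2.2).2 O.2.1⟩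
      invFun := fun O' => ⟨G.ext e O'.1, ?_, by simp [ext]⟩
      left_inv := ?_
      right_inv := ?_ }
  · rw [← G.acyclic_res e (by simp [ext] : G.ext e O'.1 e = none), G.res_ext e O'.1]
    exact O'.2
  · rintro ⟨O, hA, hO⟩
    apply Subtype.ext
    funext f
    simp only [ext, res]
    split_ifs with h
    · subst h; exact hO.symm
    · rfl
  · rintro ⟨O', hA⟩
    exact Subtype.ext (G.res_ext e O')

theorem orient_ext_res {O : G.PartialOrientation} (hO : O e = some b) :
    G.orient (G.ext e (G.res e O)) e b = O := by
  funext f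
  simp only [orient, ext, res]
  by_cases h : f = e
  · subst h; simp [hO]
  · simp [h]

theorem res_orient_ext (b : Bool) (O' : (G.deleteEdge e).PartialOrientation) :
    G.res e (G.orient (G.ext e O') e b) = O' := by
  funext f; simp [res, orient, ext, f.2]; rfl

theorem acyclic_some_iff {b : Bool} {O : G.PartialOrientation} (hO : O e = some b) :
    G.Acyclic O ↔ ((G.deleteEdge e).Acyclic (G.res e O) ∧
      ¬ (G.deleteEdge e).dReach (G.res e O) (G.dhead e b) (G.dtail e b)) := by
  have hn : G.ext e (G.res e O) e = none := by simp [ext]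
  have hres : G.res e (G.ext e (G.res e O)) = G.res e O := G.res_ext e (G.res e O)
  conv_lhs => rw [← G.orient_ext_res e hO]
  rw [G.acyclic_orient e hn b, ← G.acyclic_res e hn, ← G.dReach_res e hn, hres]

theorem card_some (b : Bool) :
    Nat.card {O : G.PartialOrientation // G.Acyclic O ∧ O e = some b}
      = Nat.card {O' : (G.deleteEdge e).PartialOrientation //
          (G.deleteEdge e).Acyclic O' ∧
            ¬ (G.deleteEdge e).dReach O' (G.dhead e b) (G.dtail e b)} := by
  refine Nat.card_congr
    { toFun := fun O => ⟨G.res e O.1, (G.acyclic_some_iff e O.2.2).1 O.2.1⟩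
      invFun := fun O' => ⟨G.orient (G.ext e O'.1) e b,
        (G.acyclic_some_iff e (by simp [orient] : (G.orient (G.ext e O'.1) e b) e = some b)).2
          (by rw [G.res_orient_ext e b O'.1]; exact O'.2),
        by simp [orient]⟩
      left_inv := ?_
      right_inv := ?_ }
  · rintro ⟨O, hA, hO⟩
    exact Subtype.ext (G.orient_ext_res e hO)
  · rintro ⟨O', hA⟩
    exact Subtype.ext (G.res_orient_ext e b O')



theorem card_contract (hfs : G.fst e ≠ G.snd e) :
    (G.contractEdge e).numAcyclic
      = Nat.card {O' : (G.deleteEdge e).PartialOrientation //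
          (G.deleteEdge e).Acyclic O' ∧
            ¬ (G.deleteEdge e).dReach O' (G.fst e) (G.snd e) ∧
            ¬ (G.deleteEdge e).dReach O' (G.snd e) (G.fst e)} :=
  Nat.card_congr (Equiv.subtypeEquivRight (fun O' => G.acyclic_contract e hfs O'))

theorem card_aux {α : Type} [Fintype α] (P Q R : α → Prop)
    (h : ∀ a, P a → ¬(Q a ∧ R a)) :
    Nat.card {a // P a ∧ ¬ Q a} + Nat.card {a // P a ∧ ¬ R a}
      = Nat.card {a // P a} + Nat.card {a // P a ∧ ¬ Q a ∧ ¬ R a} := by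
  classical
  simp only [Nat.card_eq_fintype_card, Fintype.card_subtype]
  have key := Finset.card_union_add_card_inter
    (Finset.univ.filter (fun a => P a ∧ ¬ Q a)) (Finset.univ.filter (fun a => P a ∧ ¬ R a))
  have hu : (Finset.univ.filter (fun a => P a ∧ ¬ Q a))
      ∪ (Finset.univ.filter (fun a => P a ∧ ¬ R a)) = Finset.univ.filter P := by
    ext a
    simp only [Finset.mem_union, Finset.mem_filter, Finset.mem_univ, true_and]
    constructor
    · rintro (⟨h1, _⟩ | ⟨h1, _⟩) <;> exact h1
    · intro h1
      by_cases hq : Q a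
      · exact Or.inr ⟨h1, fun hr => h a h1 ⟨hq, hr⟩⟩
      · exact Or.inl ⟨h1, hq⟩
  have hi : (Finset.univ.filter (fun a => P a ∧ ¬ Q a))
      ∩ (Finset.univ.filter (fun a => P a ∧ ¬ R a))
      = Finset.univ.filter (fun a => P a ∧ ¬ Q a ∧ ¬ R a) := by
    ext a
    simp only [Finset.mem_inter, Finset.mem_filter, Finset.mem_univ, true_and]
    tauto
  rw [hu, hi] at key
  convert key.symm using 2


theorem dReach_to_reachOn {O' : (G.deleteEdge e).PartialOrientation} {u v : G.V}
    (h : (G.deleteEdge e).dReach O' u v) : G.reachOn {f | f ≠ e} u v := by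
  refine Relation.ReflTransGen.mono ?_ _ _ h
  rintro a c ⟨f, b, hf, ht, hh⟩
  rw [dtail_delete] at ht
  rw [dhead_delete] at hh
  refine ⟨f.1, f.2, ?_⟩
  cases b
  · exact Or.inr ⟨hh, ht⟩
  · exact Or.inl ⟨ht, hh⟩

theorem reachOn_symm {S : Set G.E} {u v : G.V} (h : G.reachOn S u v) : G.reachOn S v u := by
  refine @Std.Symm.symm _ _ (@Relation.ReflTransGen.stdSymm _ _ ⟨?_⟩) _ _ h
  rintro a c ⟨f, hf, h1 | h1⟩
  · exact ⟨f, hf, Or.inr h1⟩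
  · exact ⟨f, hf, Or.inl h1⟩


end DelContr

end Multigraph

/-- deletion-contraction for the number of acyclic partial orientations. -/
theorem stmt2 (G : Multigraph) (hG : G.Connected) (e : G.E) :
    (¬ G.IsLoop e →
      G.numAcyclic = 2 * (G.deleteEdge e).numAcyclic + (G.contractEdge e).numAcyclic) ∧
    (G.IsBridge e → G.numAcyclic = 3 * (G.contractEdge e).numAcyclic) ∧
    (G.IsLoop e → G.numAcyclic = (G.deleteEdge e).numAcyclic) := by
  classical
  have hmain : ¬ G.IsLoop e →
      G.numAcyclic = 2 * (G.deleteEdge e).numAcyclic + (G.contractEdge e).numAcyclic := by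
    intro hloop
    have hfs : G.fst e ≠ G.snd e := hloop
    rw [G.card_split e, G.card_none e, G.card_some e true, G.card_some e false,
      G.card_contract e hfs]
    have hd1 : G.dhead e true = G.snd e := rfl
    have hd2 : G.dtail e true = G.fst e := rfl
    have hd3 : G.dhead e false = G.fst e := rfl
    have hd4 : G.dtail e false = G.snd e := rfl
    rw [hd1, hd2, hd3, hd4]
    have key := Multigraph.card_aux
      (P := fun O' : (G.deleteEdge e).PartialOrientation => (G.deleteEdge e).Acyclic O')
      (Q := fun O' => (G.deleteEdge e).dReach O' (G.snd e) (G.fst e))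
      (R := fun O' => (G.deleteEdge e).dReach O' (G.fst e) (G.snd e))
      (fun O' hA ⟨h1, h2⟩ => (G.deleteEdge e).not_two_way hA hfs.symm h1 h2)
    have hswap : Nat.card {O' : (G.deleteEdge e).PartialOrientation //
        (G.deleteEdge e).Acyclic O' ∧
          ¬ (G.deleteEdge e).dReach O' (G.snd e) (G.fst e) ∧
          ¬ (G.deleteEdge e).dReach O' (G.fst e) (G.snd e)}
        = Nat.card {O' : (G.deleteEdge e).PartialOrientation //
        (G.deleteEdge e).Acyclic O' ∧
          ¬ (G.deleteEdge e).dReach O' (G.fst e) (G.snd e) ∧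
          ¬ (G.deleteEdge e).dReach O' (G.snd e) (G.fst e)} :=
      Nat.card_congr (Equiv.subtypeEquivRight (fun O' => by tauto))
    rw [hswap] at key
    beta_reduce at key
    rw [Multigraph.numAcyclic]
    omega
  refine ⟨hmain, ?_, ?_⟩
  · intro hb
    have hloop : ¬ G.IsLoop e := by
      intro hl
      exact hb (by rw [Multigraph.IsLoop] at hl; rw [hl]; exact Relation.ReflTransGen.refl)
    have h1 := hmain hloop
    have hall : ∀ O' : (G.deleteEdge e).PartialOrientation,
        ¬ (G.deleteEdge e).dReach O' (G.fst e) (G.snd e) ∧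
        ¬ (G.deleteEdge e).dReach O' (G.snd e) (G.fst e) := by
      intro O'
      constructor
      · intro hr; exact hb (G.dReach_to_reachOn e hr)
      · intro hr; exact hb (G.reachOn_symm (G.dReach_to_reachOn e hr))
    have hdel : (G.deleteEdge e).numAcyclic = (G.contractEdge e).numAcyclic := by
      rw [G.card_contract e hloop, Multigraph.numAcyclic]
      exact Nat.card_congr (Equiv.subtypeEquivRight (fun O' =>
        ⟨fun h => ⟨h, (hall O').1, (hall O').2⟩, fun h => h.1⟩))
    omega
  · intro hl
    have h1 : Nat.card {O : G.PartialOrientation // G.Acyclic O ∧ O e = some true} = 0 := by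
      rw [Nat.card_eq_zero]
      left
      refine ⟨fun O => ?_⟩
      obtain ⟨O, hA, hO⟩ := O
      exact hA ⟨e, true, hO, by
        have : G.dhead e true = G.dtail e true := by
          show G.snd e = G.fst e; exact hl.symm
        rw [this]; exact Relation.ReflTransGen.refl⟩
    have h2 : Nat.card {O : G.PartialOrientation // G.Acyclic O ∧ O e = some false} = 0 := by
      rw [Nat.card_eq_zero]
      left
      refine ⟨fun O => ?_⟩
      obtain ⟨O, hA, hO⟩ := O
      exact hA ⟨e, false, hO, by
        have : G.dhead e false = G.dtail e false := by
          show G.fst e = G.snd e; exact hl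
        rw [this]; exact Relation.ReflTransGen.refl⟩
    rw [G.card_split e, h1, h2, G.card_none e]
    simp
end
end

section
/- Let f(G) be the number of strongly connected partial orientations of a connected multigraph G. For any non-bridge edge e, f(G) = f(G \ e) + 2·f(G/e); if G consists of a single bridge, f(G) = 1; if e is a loop, f(G) = 3·f(G \ e). -/
open Classical

noncomputable section

namespace Multigraph

variable (G : Multigraph) (e : G.E)

/-- Extend a partial orientation of the other edges by assigning `v` to `e`. -/
def extPO (O' : {f : G.E // f ≠ e} → Option Bool) (v : Option Bool) :
    G.PartialOrientation :=
  fun f => if h : f = e then v else O' ⟨f, h⟩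

/-- Restrict a partial orientation to the edges other than `e`. -/
def resPO (O : G.PartialOrientation) : {f : G.E // f ≠ e} → Option Bool :=
  fun f => O f.1

@[simp] lemma extPO_apply_e (O' : {f : G.E // f ≠ e} → Option Bool) (v : Option Bool) :
    extPO G e O' v e = v := dif_pos rfl

@[simp] lemma extPO_apply_ne (O' : {f : G.E // f ≠ e} → Option Bool) (v : Option Bool)
    (f : {f : G.E // f ≠ e}) : extPO G e O' v f.1 = O' f := by
  simp [extPO, f.2]

@[simp] lemma resPO_extPO (O' : {f : G.E // f ≠ e} → Option Bool) (v : Option Bool) :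
    resPO G e (extPO G e O' v) = O' := by
  funext f; simp [resPO]

lemma extPO_resPO (O : G.PartialOrientation) {v : Option Bool} (h : O e = v) :
    extPO G e (resPO G e O) v = O := by
  funext f
  by_cases hf : f = e
  · subst hf; simp [extPO, h]
  · simp [extPO, hf, resPO]

lemma exists_crossing_of_reach (S : Set G.E) (X : Set G.V)
    {u v : G.V} (h : G.reachOn S u v) (hu : u ∈ X) (hv : v ∉ X) :
    ∃ f ∈ S, G.crosses X f := by
  revert hv
  induction h with
  | refl => exact fun hv => absurd hu hv
  | @tail b c hub hbc ih =>
    intro hc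
    by_cases hb : b ∈ X
    · obtain ⟨f, hfS, hf⟩ := hbc
      refine ⟨f, hfS, ?_⟩
      unfold crosses
      rcases hf with ⟨h1, h2⟩ | ⟨h1, h2⟩ <;> rw [h1, h2] <;> tauto
    · exact ih hb

/-- The condition part of being a directed cut in `G \ e`. -/
def DelCutCond (O' : {f : G.E // f ≠ e} → Option Bool) (X : Set G.V) : Prop :=
  ∀ f : {f : G.E // f ≠ e}, G.crosses X f.1 →
    (G.fst f.1 ∈ X → O' f = some true) ∧ (G.snd f.1 ∈ X → O' f = some false)

def OutTight (O' : {f : G.E // f ≠ e} → Option Bool) (X : Set G.V) : Prop :=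
  G.fst e ∈ X ∧ G.snd e ∉ X ∧ DelCutCond G e O' X

def InTight (O' : {f : G.E // f ≠ e} → Option Bool) (X : Set G.V) : Prop :=
  G.snd e ∈ X ∧ G.fst e ∉ X ∧ DelCutCond G e O' X

lemma delCut_iff (O' : {f : G.E // f ≠ e} → Option Bool) (X : Set G.V) :
    (G.deleteEdge e).IsDirCut O' X ↔
      (∃ f : {f : G.E // f ≠ e}, G.crosses X f.1) ∧ DelCutCond G e O' X :=
  Iff.rfl

lemma scDel_iff (O' : {f : G.E // f ≠ e} → Option Bool) :
    (G.deleteEdge e).StronglyConnected O' ↔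
      ∀ X : Set G.V, ¬ ((∃ f : {f : G.E // f ≠ e}, G.crosses X f.1) ∧ DelCutCond G e O' X) := by
  unfold StronglyConnected
  rw [not_exists]
  exact Iff.rfl

lemma scContract_iff (O' : {f : G.E // f ≠ e} → Option Bool) :
    (G.contractEdge e).StronglyConnected O' ↔
      ∀ X : Set G.V, (G.fst e ∈ X ↔ G.snd e ∈ X) →
        ¬ ((∃ f : {f : G.E // f ≠ e}, G.crosses X f.1) ∧ DelCutCond G e O' X) := by
  constructor
  · rintro hsc X hsat ⟨⟨f0, hf0⟩, hcond⟩
    apply hsc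
    have wf : ∀ a b : G.V, (a = G.fst e ∧ b = G.snd e) → (a ∈ X) = (b ∈ X) := by
      rintro a b ⟨rfl, rfl⟩; exact propext hsat
    refine ⟨fun q => Quot.lift (· ∈ X) wf q, ⟨f0, hf0⟩, fun f hf => hcond f hf⟩
  · rintro h ⟨X', ⟨f0, hf0⟩, hcond⟩
    have hsat : G.fst e ∈ Quot.mk _ ⁻¹' X' ↔ G.snd e ∈ Quot.mk _ ⁻¹' X' := by
      have : Quot.mk (fun a b => a = G.fst e ∧ b = G.snd e) (G.fst e)
           = Quot.mk (fun a b => a = G.fst e ∧ b = G.snd e) (G.snd e) :=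
        Quot.sound ⟨rfl, rfl⟩
      exact Iff.of_eq (congrArg (fun q => q ∈ X') this)
    exact h _ hsat ⟨⟨f0, hf0⟩, fun f hf => hcond f hf⟩

end Multigraph
namespace Multigraph

variable (G : Multigraph) (e : G.E)

lemma not_crosses_sat {X : Set G.V} (hsat : G.fst e ∈ X ↔ G.snd e ∈ X) :
    ¬ G.crosses X e := fun h => h hsat

lemma crosses_cases {X : Set G.V} {f : G.E} (h : G.crosses X f) :
    (G.fst f ∈ X ∧ G.snd f ∉ X) ∨ (G.snd f ∈ X ∧ G.fst f ∉ X) := by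
  unfold crosses at h; tauto

/-- Existence of another crossing edge for a separating cut, when `e` is not a bridge. -/
lemma exists_crossing_sep (hne : ¬ G.IsBridge e) {X : Set G.V}
    (hsat : ¬ (G.fst e ∈ X ↔ G.snd e ∈ X)) :
    ∃ f : {f : G.E // f ≠ e}, G.crosses X f.1 := by
  have hreach : G.reachOn {f | f ≠ e} (G.fst e) (G.snd e) := not_not.mp hne
  rcases crosses_cases G hsat with ⟨h1, h2⟩ | ⟨h1, h2⟩
  · obtain ⟨f, hfS, hf⟩ := exists_crossing_of_reach G _ X hreach h1 h2
    exact ⟨⟨f, hfS⟩, hf⟩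
  · obtain ⟨f, hfS, hf⟩ := exists_crossing_of_reach G _ Xᶜ hreach (by simpa using h2)
      (by simpa using h1)
    refine ⟨⟨f, hfS⟩, fun hiff => hf ?_⟩
    simp only [Set.mem_compl_iff]
    tauto

/-- In a connected graph, every nonempty proper vertex set has a crossing edge. -/
lemma exists_crossing_proper (hG : G.Connected) {X : Set G.V} {u v : G.V}
    (hu : u ∈ X) (hv : v ∉ X) : ∃ f : G.E, G.crosses X f := by
  obtain ⟨f, _, hf⟩ := exists_crossing_of_reach G Set.univ X (hG u v) hu hv
  exact ⟨f, hf⟩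

variable {O' : {f : G.E // f ≠ e} → Option Bool}

/-- Characterization for the fiber `O e = none`. -/
lemma sc_ext_none :
    G.StronglyConnected (extPO G e O' none) ↔ (G.contractEdge e).StronglyConnected O' := by
  rw [scContract_iff]
  constructor
  · rintro hsc X hsat ⟨⟨f0, hf0⟩, hcond⟩
    apply hsc
    refine ⟨X, ⟨f0.1, hf0⟩, fun g hg => ?_⟩
    have hge : g ≠ e := fun h => not_crosses_sat G e hsat (h ▸ hg)
    have := hcond ⟨g, hge⟩ hg
    simpa [extPO, hge] using this
  · rintro h ⟨X, ⟨f0, hf0⟩, hcond⟩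
    by_cases hsat : G.fst e ∈ X ↔ G.snd e ∈ X
    · refine h X hsat ⟨⟨⟨f0, fun hf => not_crosses_sat G e hsat (hf ▸ hf0)⟩, hf0⟩,
        fun f hf => ?_⟩
      have := hcond f.1 hf
      simpa [extPO, f.2] using this
    · have hcr : G.crosses X e := hsat
      have := hcond e hcr
      rcases crosses_cases G hcr with ⟨h1, _⟩ | ⟨h1, _⟩
      · have := this.1 h1; simp [extPO] at this
      · have := this.2 h1; simp [extPO] at this

/-- Characterization for the fiber `O e = some true`. -/
lemma sc_ext_true :
    G.StronglyConnected (extPO G e O' (some true)) ↔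
      (G.contractEdge e).StronglyConnected O' ∧ ¬ ∃ X, OutTight G e O' X := by
  rw [scContract_iff]
  constructor
  · intro hsc
    constructor
    · rintro X hsat ⟨⟨f0, hf0⟩, hcond⟩
      apply hsc
      refine ⟨X, ⟨f0.1, hf0⟩, fun g hg => ?_⟩
      have hge : g ≠ e := fun h => not_crosses_sat G e hsat (h ▸ hg)
      have := hcond ⟨g, hge⟩ hg
      simpa [extPO, hge] using this
    · rintro ⟨X, h1, h2, hcond⟩
      apply hsc
      refine ⟨X, ⟨e, fun hiff => h2 (hiff.mp h1)⟩, fun g hg => ?_⟩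
      by_cases hge : g = e
      · subst hge
        exact ⟨fun _ => by simp [extPO], fun h => absurd h h2⟩
      · have := hcond ⟨g, hge⟩ hg
        simpa [extPO, hge] using this
  · rintro ⟨hcon, hout⟩ ⟨X, ⟨f0, hf0⟩, hcond⟩
    by_cases hsat : G.fst e ∈ X ↔ G.snd e ∈ X
    · refine hcon X hsat ⟨⟨⟨f0, fun hf => not_crosses_sat G e hsat (hf ▸ hf0)⟩, hf0⟩,
        fun f hf => ?_⟩
      have := hcond f.1 hf
      simpa [extPO, f.2] using this
    · have hcr : G.crosses X e := hsat
      rcases crosses_cases G hcr with ⟨h1, h2⟩ | ⟨h1, h2⟩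
      · refine hout ⟨X, h1, h2, fun f hf => ?_⟩
        have := hcond f.1 hf
        simpa [extPO, f.2] using this
      · have := (hcond e hcr).2 h1
        simp [extPO] at this

/-- Characterization for the fiber `O e = some false`. -/
lemma sc_ext_false :
    G.StronglyConnected (extPO G e O' (some false)) ↔
      (G.contractEdge e).StronglyConnected O' ∧ ¬ ∃ X, InTight G e O' X := by
  rw [scContract_iff]
  constructor
  · intro hsc
    constructor
    · rintro X hsat ⟨⟨f0, hf0⟩, hcond⟩
      apply hsc
      refine ⟨X, ⟨f0.1, hf0⟩, fun g hg => ?_⟩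
      have hge : g ≠ e := fun h => not_crosses_sat G e hsat (h ▸ hg)
      have := hcond ⟨g, hge⟩ hg
      simpa [extPO, hge] using this
    · rintro ⟨X, h1, h2, hcond⟩
      apply hsc
      refine ⟨X, ⟨e, fun hiff => h2 (hiff.mpr h1)⟩, fun g hg => ?_⟩
      by_cases hge : g = e
      · subst hge
        exact ⟨fun h => absurd h h2, fun _ => by simp [extPO]⟩
      · have := hcond ⟨g, hge⟩ hg
        simpa [extPO, hge] using this
  · rintro ⟨hcon, hin⟩ ⟨X, ⟨f0, hf0⟩, hcond⟩
    by_cases hsat : G.fst e ∈ X ↔ G.snd e ∈ X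
    · refine hcon X hsat ⟨⟨⟨f0, fun hf => not_crosses_sat G e hsat (hf ▸ hf0)⟩, hf0⟩,
        fun f hf => ?_⟩
      have := hcond f.1 hf
      simpa [extPO, f.2] using this
    · have hcr : G.crosses X e := hsat
      rcases crosses_cases G hcr with ⟨h1, h2⟩ | ⟨h1, h2⟩
      · have := (hcond e hcr).1 h1
        simp [extPO] at this
      · refine hin ⟨X, h1, h2, fun f hf => ?_⟩
        have := hcond f.1 hf
        simpa [extPO, f.2] using this

/-- SC for the deletion in terms of the contraction and tight cuts. -/
lemma scDel_iff' (hne : ¬ G.IsBridge e) :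
    (G.deleteEdge e).StronglyConnected O' ↔
      (G.contractEdge e).StronglyConnected O' ∧
        (¬ ∃ X, OutTight G e O' X) ∧ (¬ ∃ X, InTight G e O' X) := by
  rw [scDel_iff]
  constructor
  · intro h
    refine ⟨(scContract_iff G e O').mpr fun X _ => h X, ?_, ?_⟩
    · rintro ⟨X, h1, h2, hcond⟩
      exact h X ⟨exists_crossing_sep G e hne (fun hiff => h2 (hiff.mp h1)), hcond⟩
    · rintro ⟨X, h1, h2, hcond⟩
      exact h X ⟨exists_crossing_sep G e hne (fun hiff => h2 (hiff.mpr h1)), hcond⟩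
  · rintro ⟨hcon, hout, hin⟩ X ⟨hex, hcond⟩
    by_cases hsat : G.fst e ∈ X ↔ G.snd e ∈ X
    · exact (scContract_iff G e O').mp hcon X hsat ⟨hex, hcond⟩
    · rcases crosses_cases G (show G.crosses X e from hsat) with ⟨h1, h2⟩ | ⟨h1, h2⟩
      · exact hout ⟨X, h1, h2, hcond⟩
      · exact hin ⟨X, h1, h2, hcond⟩

/-- Uncrossing: a strongly connected orientation of the contraction cannot have
both an out-tight and an in-tight cut. -/
lemma not_outTight_and_inTight (hG : G.Connected) (hne : ¬ G.IsBridge e)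
    (hcon : (G.contractEdge e).StronglyConnected O')
    {X Y : Set G.V} (hX : OutTight G e O' X) (hY : InTight G e O' Y) : False := by
  obtain ⟨hXf, hXs, hXc⟩ := hX
  obtain ⟨hYs, hYf, hYc⟩ := hY
  have hcon' := (scContract_iff G e O').mp hcon
  by_cases hU : ∃ v, v ∉ X ∪ Y
  · -- X ∪ Y is proper; it is a saturated directed cut
    obtain ⟨v, hv⟩ := hU
    obtain ⟨f0, hf0⟩ := exists_crossing_proper G hG (X := X ∪ Y)
      (u := G.fst e) (Or.inl hXf) hv
    have hf0e : f0 ≠ e := by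
      intro h; subst h
      exact hf0 (by simp [hXf, hYs] : G.fst f0 ∈ X ∪ Y ↔ G.snd f0 ∈ X ∪ Y)
    apply hcon' (X ∪ Y) (by simp [hXf, hYs])
    refine ⟨⟨⟨f0, hf0e⟩, hf0⟩, fun f hf => ?_⟩
    constructor
    · intro hfst
      have hsnd : G.snd f.1 ∉ X ∪ Y := fun h => hf ⟨fun _ => h, fun _ => hfst⟩
      rcases hfst with h | h
      · exact (hXc f (fun hiff => (fun hh => hsnd (Or.inl hh)) (hiff.mp h))).1 h
      · exact (hYc f (fun hiff => (fun hh => hsnd (Or.inr hh)) (hiff.mp h))).1 h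
    · intro hsnd
      have hfst : G.fst f.1 ∉ X ∪ Y := fun h => hf ⟨fun _ => hsnd, fun _ => h⟩
      rcases hsnd with h | h
      · exact (hXc f (fun hiff => (fun hh => hfst (Or.inl hh)) (hiff.mpr h))).2 h
      · exact (hYc f (fun hiff => (fun hh => hfst (Or.inr hh)) (hiff.mpr h))).2 h
  · push_neg at hU
    by_cases hI : ∃ v, v ∈ X ∩ Y
    · -- X ∩ Y is nonempty; it is a saturated directed cut
      obtain ⟨v, hv⟩ := hI
      have hsnd_not : G.snd e ∉ X ∩ Y := fun h => hXs h.1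
      have hfst_not : G.fst e ∉ X ∩ Y := fun h => hYf h.2
      obtain ⟨f0, hf0⟩ := exists_crossing_proper G hG (X := X ∩ Y) hv hsnd_not
      have hf0e : f0 ≠ e := by
        intro h; subst h
        exact hf0 (by simp [hfst_not, hsnd_not] :
          G.fst f0 ∈ X ∩ Y ↔ G.snd f0 ∈ X ∩ Y)
      apply hcon' (X ∩ Y) (by simp [hfst_not, hsnd_not])
      refine ⟨⟨⟨f0, hf0e⟩, hf0⟩, fun f hf => ?_⟩
      constructor
      · intro hfst
        have hsnd : G.snd f.1 ∉ X ∩ Y := fun h => hf ⟨fun _ => h, fun _ => hfst⟩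
        by_cases hsX : G.snd f.1 ∈ X
        · have hsY : G.snd f.1 ∉ Y := fun h => hsnd ⟨hsX, h⟩
          exact (hYc f (fun hiff => hsY (hiff.mp hfst.2))).1 hfst.2
        · exact (hXc f (fun hiff => hsX (hiff.mp hfst.1))).1 hfst.1
      · intro hsnd
        have hfst : G.fst f.1 ∉ X ∩ Y := fun h => hf ⟨fun _ => hsnd, fun _ => h⟩
        by_cases hsX : G.fst f.1 ∈ X
        · have hsY : G.fst f.1 ∉ Y := fun h => hfst ⟨hsX, h⟩
          exact (hYc f (fun hiff => hsY (hiff.mpr hsnd.2))).2 hsnd.2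
        · exact (hXc f (fun hiff => hsX (hiff.mpr hsnd.1))).2 hsnd.1
    · -- Y = Xᶜ : direct contradiction on a crossing edge
      push_neg at hI
      obtain ⟨f, hf⟩ := exists_crossing_sep G e hne
        (fun hiff => hXs (hiff.mp hXf))
      have hXiff : ∀ w, w ∉ X → w ∈ Y := fun w hw => (hU w).resolve_left hw
      have hYX : ∀ w, w ∈ Y → w ∉ X := fun w hwY hwX => hI w ⟨hwX, hwY⟩
      rcases crosses_cases G hf with ⟨h1, h2⟩ | ⟨h1, h2⟩
      · have ht := (hXc f hf).1 h1
        have hsY : G.snd f.1 ∈ Y := hXiff _ h2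
        have hfY : G.fst f.1 ∉ Y := fun h => (hYX _ h) h1
        have hfcr : G.crosses Y f.1 := fun hiff => hfY (hiff.mpr hsY)
        have hff := (hYc f hfcr).2 hsY
        rw [ht] at hff; exact Bool.noConfusion (Option.some.inj hff)
      · have ht := (hXc f hf).2 h1
        have hfY : G.fst f.1 ∈ Y := hXiff _ h2
        have hsY : G.snd f.1 ∉ Y := fun h => (hYX _ h) h1
        have hfcr : G.crosses Y f.1 := fun hiff => hsY (hiff.mp hfY)
        have hff := (hYc f hfcr).1 hfY
        rw [ht] at hff; exact Bool.noConfusion (Option.some.inj hff)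

end Multigraph
namespace Multigraph

variable (G : Multigraph) (e : G.E)

/-- Generic equivalence between a fiber of strongly connected partial orientations
and a predicate on the restricted orientations. -/
def fiberEquiv (v : Option Bool) (P : ({f : G.E // f ≠ e} → Option Bool) → Prop)
    (hP : ∀ O', G.StronglyConnected (extPO G e O' v) ↔ P O') :
    {O : G.PartialOrientation // G.StronglyConnected O ∧ O e = v} ≃
      {O' : {f : G.E // f ≠ e} → Option Bool // P O'} where
  toFun O := ⟨resPO G e O.1, (hP _).mp (by
    rw [extPO_resPO G e O.1 O.2.2]; exact O.2.1)⟩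
  invFun O' := ⟨extPO G e O'.1 v, (hP _).mpr O'.2, extPO_apply_e G e O'.1 v⟩
  left_inv O := Subtype.ext (extPO_resPO G e O.1 O.2.2)
  right_inv O' := Subtype.ext (resPO_extPO G e O'.1 v)

lemma ncard_fiber (v : Option Bool) (P : ({f : G.E // f ≠ e} → Option Bool) → Prop)
    (hP : ∀ O', G.StronglyConnected (extPO G e O' v) ↔ P O') :
    {O : G.PartialOrientation | G.StronglyConnected O ∧ O e = v}.ncard
      = (setOf P).ncard := by
  rw [← Nat.card_coe_set_eq, ← Nat.card_coe_set_eq]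
  exact Nat.card_congr ((Equiv.subtypeEquivRight fun _ => Iff.rfl).trans
    ((fiberEquiv G e v P hP).trans (Equiv.subtypeEquivRight fun _ => Iff.rfl)))

lemma numStrong_eq_ncard : G.numStrong = {O : G.PartialOrientation | G.StronglyConnected O}.ncard := by
  rw [← Nat.card_coe_set_eq]
  exact Nat.card_congr (Equiv.subtypeEquivRight fun _ => Iff.rfl)

/-- The fiber partition of the strongly connected partial orientations. -/
lemma ncard_partition :
    {O : G.PartialOrientation | G.StronglyConnected O}.ncard
      = {O : G.PartialOrientation | G.StronglyConnected O ∧ O e = none}.ncard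
        + {O : G.PartialOrientation | G.StronglyConnected O ∧ O e = some true}.ncard
        + {O : G.PartialOrientation | G.StronglyConnected O ∧ O e = some false}.ncard := by
  have hU : {O : G.PartialOrientation | G.StronglyConnected O}
      = ({O : G.PartialOrientation | G.StronglyConnected O ∧ O e = none}
          ∪ {O : G.PartialOrientation | G.StronglyConnected O ∧ O e = some true})
        ∪ {O : G.PartialOrientation | G.StronglyConnected O ∧ O e = some false} := by
    ext O
    simp only [Set.mem_union, Set.mem_setOf_eq]
    constructor
    · intro h
      rcases hv : O e with _ | b
      · exact Or.inl (Or.inl ⟨h, rfl⟩)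
      · cases b
        · exact Or.inr ⟨h, rfl⟩
        · exact Or.inl (Or.inr ⟨h, rfl⟩)
    · rintro ((⟨h, _⟩ | ⟨h, _⟩) | ⟨h, _⟩) <;> exact h
  rw [hU, Set.ncard_union_eq, Set.ncard_union_eq]
  · rw [Set.disjoint_left]
    rintro O ⟨_, h1⟩ ⟨_, h2⟩
    rw [h1] at h2; exact absurd h2 (by simp)
  · rw [Set.disjoint_left]
    rintro O (⟨_, h1⟩ | ⟨_, h1⟩) ⟨_, h2⟩ <;> rw [h1] at h2
    · exact absurd h2 (by simp)
    · exact Bool.noConfusion (Option.some.inj h2)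

/-- Part 1: deletion-contraction for a non-bridge edge. -/
lemma part1 (hG : G.Connected) (hne : ¬ G.IsBridge e) :
    G.numStrong = (G.deleteEdge e).numStrong + 2 * (G.contractEdge e).numStrong := by
  classical
  set T : Set ({f : G.E // f ≠ e} → Option Bool) :=
    {O' | (G.contractEdge e).StronglyConnected O'} with hT
  set NOut : Set ({f : G.E // f ≠ e} → Option Bool) :=
    {O' | (G.contractEdge e).StronglyConnected O' ∧ ¬ ∃ X, OutTight G e O' X} with hNOut
  set NIn : Set ({f : G.E // f ≠ e} → Option Bool) :=
    {O' | (G.contractEdge e).StronglyConnected O' ∧ ¬ ∃ X, InTight G e O' X} with hNIn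
  set D : Set ({f : G.E // f ≠ e} → Option Bool) :=
    {O' | (G.deleteEdge e).StronglyConnected O'} with hD
  have hUnionT : NOut ∪ NIn = T := by
    ext O'
    simp only [hNOut, hNIn, hT, Set.mem_union, Set.mem_setOf_eq]
    constructor
    · rintro (⟨h, _⟩ | ⟨h, _⟩) <;> exact h
    · intro h
      by_cases hout : ∃ X, OutTight G e O' X
      · refine Or.inr ⟨h, ?_⟩
        rintro ⟨Y, hY⟩
        obtain ⟨X, hX⟩ := hout
        exact not_outTight_and_inTight G e hG hne h hX hY
      · exact Or.inl ⟨h, hout⟩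
  have hInterD : NOut ∩ NIn = D := by
    ext O'
    simp only [hNOut, hNIn, hD, Set.mem_inter_iff, Set.mem_setOf_eq]
    refine Iff.trans ?_ (scDel_iff' G e hne (O' := O')).symm
    tauto
  have key : NOut.ncard + NIn.ncard = T.ncard + D.ncard := by
    rw [← Set.ncard_union_add_ncard_inter NOut NIn, hUnionT, hInterD]
  have h0 := ncard_fiber G e none
    (fun O' => (G.contractEdge e).StronglyConnected O') (fun O' => sc_ext_none G e)
  have h1 := ncard_fiber G e (some true)
    (fun O' => (G.contractEdge e).StronglyConnected O' ∧ ¬ ∃ X, OutTight G e O' X)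
    (fun O' => sc_ext_true G e)
  have h2 := ncard_fiber G e (some false)
    (fun O' => (G.contractEdge e).StronglyConnected O' ∧ ¬ ∃ X, InTight G e O' X)
    (fun O' => sc_ext_false G e)
  have hdel : (G.deleteEdge e).numStrong = D.ncard := numStrong_eq_ncard _
  have hcon : (G.contractEdge e).numStrong = T.ncard := numStrong_eq_ncard _
  rw [numStrong_eq_ncard, ncard_partition G e, h0, h1, h2, hdel, hcon]
  show T.ncard + NOut.ncard + NIn.ncard = D.ncard + 2 * T.ncard
  generalize T.ncard = a at key ⊢
  generalize NOut.ncard = b at key ⊢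
  generalize NIn.ncard = c at key ⊢
  generalize D.ncard = d at key ⊢
  clear * - key
  omega

end Multigraph
namespace Multigraph

variable (G : Multigraph) (e : G.E)

/-- Part 2: a graph consisting of a single bridge has exactly one strongly connected
partial orientation, namely the trivial one. -/
lemma part2 (hall : ∀ f : G.E, f = e) (hbr : G.IsBridge e) : G.numStrong = 1 := by
  have hnl : G.fst e ≠ G.snd e := by
    intro h
    exact hbr (h ▸ Relation.ReflTransGen.refl)
  have hchar : ∀ O : G.PartialOrientation, G.StronglyConnected O ↔ O = fun _ => none := by
    intro O
    constructor
    · intro hsc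
      funext f
      rw [hall f]
      rcases hv : O e with _ | b
      · rfl
      · exfalso
        cases b
        · -- oriented snd → fst : cut at {snd e}
          apply hsc
          refine ⟨{G.snd e}, ⟨e, ?_⟩, fun g hg => ?_⟩
          · intro hiff
            exact hnl (hiff.mpr rfl)
          · rw [hall g]
            exact ⟨fun h => absurd h hnl, fun _ => hv⟩
        · -- oriented fst → snd : cut at {fst e}
          apply hsc
          refine ⟨{G.fst e}, ⟨e, ?_⟩, fun g hg => ?_⟩
          · intro hiff
            exact hnl (hiff.mp rfl).symm
          · rw [hall g]
            exact ⟨fun _ => hv, fun h => absurd h.symm hnl⟩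
    · rintro rfl ⟨X, ⟨f0, hf0⟩, hcond⟩
      rw [hall f0] at hf0
      rcases crosses_cases G hf0 with ⟨h1, _⟩ | ⟨h1, _⟩
      · exact absurd ((hcond e hf0).1 h1) (by simp)
      · exact absurd ((hcond e hf0).2 h1) (by simp)
  have : {O : G.PartialOrientation | G.StronglyConnected O} = {fun _ => none} := by
    ext O
    simp only [Set.mem_setOf_eq, Set.mem_singleton_iff]
    exact hchar O
  rw [numStrong_eq_ncard, this, Set.ncard_singleton]

lemma loop_cut_iff (hl : G.IsLoop e) (O : G.PartialOrientation) (X : Set G.V) :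
    G.IsDirCut O X ↔ (G.deleteEdge e).IsDirCut (resPO G e O) X := by
  have hecr : ¬ G.crosses X e := fun h => h (by rw [hl])
  rw [delCut_iff]
  constructor
  · rintro ⟨⟨f0, hf0⟩, hcond⟩
    have hf0e : f0 ≠ e := fun h => hecr (h ▸ hf0)
    exact ⟨⟨⟨f0, hf0e⟩, hf0⟩, fun f hf => hcond f.1 hf⟩
  · rintro ⟨⟨f0, hf0⟩, hcond⟩
    refine ⟨⟨f0.1, hf0⟩, fun g hg => ?_⟩
    have hge : g ≠ e := fun h => hecr (h ▸ hg)
    exact hcond ⟨g, hge⟩ hg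

lemma loop_sc_iff (hl : G.IsLoop e) (O : G.PartialOrientation) :
    G.StronglyConnected O ↔ (G.deleteEdge e).StronglyConnected (resPO G e O) := by
  unfold StronglyConnected
  constructor
  · rintro h ⟨X, hX⟩
    exact h ⟨X, (loop_cut_iff G e hl O X).mpr hX⟩
  · rintro h ⟨X, hX⟩
    exact h ⟨X, (loop_cut_iff G e hl O X).mp hX⟩

/-- Part 3: a loop multiplies the count by three. -/
def loopEquiv (hl : G.IsLoop e) :
    {O : G.PartialOrientation // G.StronglyConnected O} ≃
      Option Bool ×
        {O' : {f : G.E // f ≠ e} → Option Bool //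
          (G.deleteEdge e).StronglyConnected O'} where
  toFun O := (O.1 e, ⟨resPO G e O.1, (loop_sc_iff G e hl O.1).mp O.2⟩)
  invFun p := ⟨extPO G e p.2.1 p.1, by
    rw [loop_sc_iff G e hl, resPO_extPO]
    exact p.2.2⟩
  left_inv O := Subtype.ext (extPO_resPO G e O.1 rfl)
  right_inv p := by
    refine Prod.ext ?_ (Subtype.ext ?_)
    · exact extPO_apply_e G e p.2.1 p.1
    · exact resPO_extPO G e p.2.1 p.1

/-- Part 3: a loop multiplies the count by three. -/
lemma part3 (hl : G.IsLoop e) :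
    G.numStrong = 3 * (G.deleteEdge e).numStrong := by
  have hequiv := loopEquiv G e hl
  unfold numStrong
  rw [Nat.card_congr hequiv, Nat.card_prod]
  congr 1
  simp [Nat.card_eq_fintype_card]

end Multigraph

/-- deletion-contraction for the number of strongly connected partial
orientations. -/
theorem stmt5 (G : Multigraph) (hG : G.Connected) (e : G.E) :
    (¬ G.IsBridge e →
      G.numStrong = (G.deleteEdge e).numStrong + 2 * (G.contractEdge e).numStrong) ∧
    ((∀ f : G.E, f = e) → G.IsBridge e → G.numStrong = 1) ∧
    (G.IsLoop e → G.numStrong = 3 * (G.deleteEdge e).numStrong) :=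
  ⟨fun hne => Multigraph.part1 G e hG hne,
   fun hall hbr => Multigraph.part2 G e hall hbr,
   fun hl => Multigraph.part3 G e hl⟩
end
end

section
/- Fix a total order < on the edges and a reference full orientation A of a connected multigraph G. If one repeatedly reverses nonminimal directed cuts of a partial orientation (a directed cut is nonminimal when its <-minimum edge is oriented oppositely to A), this process terminates: no sequence of such reversals can return to the starting partial orientation. -/
open Classical

noncomputable section

/-- `O'` is obtained from `O` by reversing one *nonminimal* directed cut. -/
def Multigraph.nonminCutRev (G : Multigraph) [LinearOrder G.E] (A : G.E → Bool)
    (O O' : G.PartialOrientation) : Prop :=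
  ∃ X, G.IsDirCut O X ∧ ¬ G.MinimalCut A O X ∧
    (∀ e, ¬ G.crosses X e → O' e = O e) ∧ (∀ e, G.crosses X e → O' e = (O e).map not)

/-- Weight of an edge: a power of two decreasing in the edge order. -/
def edgeW (G : Multigraph) [LinearOrder G.E] (e : G.E) : ℕ :=
  2 ^ (Finset.univ.filter (fun f => e < f)).card

/-- Potential: total weight of edges oriented opposite to the reference orientation. -/
def badWeight (G : Multigraph) [LinearOrder G.E] (A : G.E → Bool)
    (O : G.PartialOrientation) : ℕ :=
  ∑ e ∈ Finset.univ.filter (fun e => O e = some (!A e)), edgeW G e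

lemma sum_range_two_pow_lt (k : ℕ) : ∑ i ∈ Finset.range k, 2 ^ i < 2 ^ k := by
  induction k with
  | zero => simp
  | succ n ih =>
    rw [Finset.sum_range_succ, pow_succ]
    omega

lemma sum_edgeW_lt (G : Multigraph) [LinearOrder G.E] (e : G.E) (S : Finset G.E)
    (hS : ∀ f ∈ S, e < f) : ∑ f ∈ S, edgeW G f < edgeW G e := by
  set c : G.E → ℕ := fun f => (Finset.univ.filter (fun g => f < g)).card with hc
  have hmono : ∀ f g : G.E, f < g → c g < c f := by
    intro f g hfg
    apply Finset.card_lt_card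
    constructor
    · intro x hx
      simp only [Finset.mem_filter, Finset.mem_univ, true_and] at hx ⊢
      exact hfg.trans hx
    · intro hsub
      have : g ∈ Finset.univ.filter (fun x => f < x) := by
        simp [hfg]
      have := hsub this
      simp at this
  have hinj : Set.InjOn c S := by
    intro f hf g hg hfg
    by_contra hne
    rcases lt_or_gt_of_ne hne with h | h
    · exact absurd hfg (Nat.ne_of_gt (hmono f g h))
    · exact absurd hfg (Nat.ne_of_lt (hmono g f h))
  calc ∑ f ∈ S, edgeW G f = ∑ i ∈ S.image c, 2 ^ i := by
        rw [Finset.sum_image (fun x hx y hy h => hinj hx hy h)]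
        rfl
    _ ≤ ∑ i ∈ Finset.range (c e), 2 ^ i := by
        apply Finset.sum_le_sum_of_subset
        intro i hi
        simp only [Finset.mem_image] at hi
        obtain ⟨f, hf, rfl⟩ := hi
        exact Finset.mem_range.mpr (hmono e f (hS f hf))
    _ < 2 ^ (c e) := sum_range_two_pow_lt _
    _ = edgeW G e := rfl

lemma step_decreases (G : Multigraph) [LinearOrder G.E] (A : G.E → Bool)
    {O O' : G.PartialOrientation} (h : G.nonminCutRev A O O') :
    badWeight G A O' < badWeight G A O := by
  classical
  obtain ⟨X, hcut, hnonmin, hsame, hflip⟩ := h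
  set C : Finset G.E := Finset.univ.filter (fun e => G.crosses X e) with hC
  have hmemC : ∀ e, e ∈ C ↔ G.crosses X e := by
    intro e; simp [hC]
  have hne : C.Nonempty := by
    obtain ⟨e, he⟩ := hcut.1
    exact ⟨e, (hmemC e).mpr he⟩
  set e₀ := C.min' hne with he₀
  have he₀C : e₀ ∈ C := C.min'_mem hne
  have hcross₀ : G.crosses X e₀ := (hmemC e₀).mp he₀C
  have hminle : ∀ e', G.crosses X e' → e₀ ≤ e' := fun e' he' =>
    C.min'_le e' ((hmemC e').mpr he')
  -- the cut is directed, so e₀ is oriented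
  have hb₀ : ∃ b, O e₀ = some b := by
    have h2 := hcut.2 e₀ hcross₀
    by_cases hf : G.fst e₀ ∈ X
    · exact ⟨true, h2.1 hf⟩
    · have hs : G.snd e₀ ∈ X := by
        unfold Multigraph.crosses at hcross₀
        tauto
      exact ⟨false, h2.2 hs⟩
  obtain ⟨b₀, hOb₀⟩ := hb₀
  have hbad₀ : O e₀ = some (!A e₀) := by
    have hne' : O e₀ ≠ some (A e₀) := by
      intro heq
      exact hnonmin ⟨e₀, hcross₀, hminle, heq⟩
    rw [hOb₀] at hne' ⊢
    have hb : b₀ ≠ A e₀ := fun hb => hne' (by rw [hb])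
    exact congrArg some (Bool.eq_not_iff.mpr hb)
  have hgood₀ : O' e₀ = some (A e₀) := by
    rw [hflip e₀ hcross₀, hbad₀]
    simp
  set B : Finset G.E := Finset.univ.filter (fun e => O e = some (!A e)) with hB
  set B' : Finset G.E := Finset.univ.filter (fun e => O' e = some (!A e)) with hB'
  have he₀B : e₀ ∈ B := by simp [hB, hbad₀]
  have he₀B' : e₀ ∉ B' := by
    simp only [hB', Finset.mem_filter, Finset.mem_univ, true_and, hgood₀]
    intro hcontra
    have : A e₀ = !A e₀ := by injection hcontra
    exact Bool.not_ne_self (A e₀) this.symm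
  have hsplit : ∀ (D : Finset G.E),
      ∑ e ∈ D, edgeW G e
        = ∑ e ∈ D.filter (fun e => e ∈ C), edgeW G e
          + ∑ e ∈ D.filter (fun e => e ∉ C), edgeW G e := by
    intro D
    exact (Finset.sum_filter_add_sum_filter_not D (fun e => e ∈ C) _).symm
  have houtside : B'.filter (fun e => e ∉ C) = B.filter (fun e => e ∉ C) := by
    ext e
    simp only [Finset.mem_filter, Finset.mem_univ, true_and, hB, hB']
    constructor
    · rintro ⟨h1, h2⟩
      exact ⟨by rw [← hsame e (fun hc => h2 ((hmemC e).mpr hc))]; exact h1, h2⟩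
    · rintro ⟨h1, h2⟩
      exact ⟨by rw [hsame e (fun hc => h2 ((hmemC e).mpr hc))]; exact h1, h2⟩
  have hsub : B'.filter (fun e => e ∈ C) ⊆ C.erase e₀ := by
    intro e he
    simp only [Finset.mem_filter] at he
    refine Finset.mem_erase.mpr ⟨?_, he.2⟩
    intro heq
    exact he₀B' (heq ▸ he.1)
  have herase : ∀ f ∈ C.erase e₀, e₀ < f := by
    intro f hf
    obtain ⟨hne', hfC⟩ := Finset.mem_erase.mp hf
    exact lt_of_le_of_ne (hminle f ((hmemC f).mp hfC)) (Ne.symm hne')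
  have h1 : ∑ e ∈ B'.filter (fun e => e ∈ C), edgeW G e < edgeW G e₀ := by
    calc ∑ e ∈ B'.filter (fun e => e ∈ C), edgeW G e
        ≤ ∑ e ∈ C.erase e₀, edgeW G e :=
          Finset.sum_le_sum_of_subset hsub
      _ < edgeW G e₀ := sum_edgeW_lt G e₀ _ herase
  have h2 : edgeW G e₀ ≤ ∑ e ∈ B.filter (fun e => e ∈ C), edgeW G e := by
    apply Finset.single_le_sum (f := fun e => edgeW G e) (fun _ _ => Nat.zero_le _)
    exact Finset.mem_filter.mpr ⟨he₀B, he₀C⟩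
  have := hsplit B
  have := hsplit B'
  unfold badWeight
  rw [← hB, ← hB', hsplit B, hsplit B', houtside]
  omega

lemma transGen_decreases (G : Multigraph) [LinearOrder G.E] (A : G.E → Bool)
    {O O' : G.PartialOrientation} (h : Relation.TransGen (G.nonminCutRev A) O O') :
    badWeight G A O' < badWeight G A O := by
  induction h with
  | single h' => exact step_decreases G A h'
  | tail _ h' ih => exact (step_decreases G A h').trans ih

/-- repeatedly reversing nonminimal directed cuts terminates; no nonempty
sequence of such reversals returns to the starting partial orientation. -/
theorem stmt6 (G : Multigraph) [LinearOrder G.E] (A : G.E → Bool) (hG : G.Connected)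
    (O : G.PartialOrientation) :
    ¬ Relation.TransGen (G.nonminCutRev A) O O := by
  intro h
  exact absurd (transGen_decreases G A h) (lt_irrefl _)
end
end

section
/- If two partial orientations O and O' of a connected multigraph orient the same set of edges and are related by a sequence of directed cut reversals, then the set of edges on which they differ decomposes as a disjoint union of directed cuts of O. Consequently, each equivalence class of partial orientations modulo cut reversals contains exactly one cut minimal partial orientation (with respect to any fixed pair (<, A)). -/
open Classical

noncomputable section

section Stmt7Aux

variable (G : Multigraph)

lemma crosses_compl (X : Set G.V) (e : G.E) : G.crosses Xᶜ e ↔ G.crosses X e := by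
  unfold Multigraph.crosses
  simp only [Set.mem_compl_iff]
  tauto

lemma crosses_some {O : G.PartialOrientation} {X : Set G.V} (h : G.IsDirCut O X)
    {e : G.E} (hc : G.crosses X e) : ∃ b, O e = some b := by
  rcases h with ⟨-, h2⟩
  have h3 := h2 e hc
  unfold Multigraph.crosses at hc
  by_cases hf : G.fst e ∈ X
  · exact ⟨true, h3.1 hf⟩
  · have hs : G.snd e ∈ X := by tauto
    exact ⟨false, h3.2 hs⟩

lemma cutRev_symm {O O' : G.PartialOrientation} (h : G.cutRev O O') : G.cutRev O' O := by
  rcases h with ⟨X, hX, hnc, hc⟩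
  refine ⟨Xᶜ, ⟨?_, ?_⟩, ?_, ?_⟩
  · rcases hX.1 with ⟨e, he⟩
    exact ⟨e, (crosses_compl G X e).2 he⟩
  · intro e he
    have hce : G.crosses X e := (crosses_compl G X e).1 he
    have h3 := hX.2 e hce
    constructor
    · intro hf
      have hs : G.snd e ∈ X := by
        unfold Multigraph.crosses at hce
        simp only [Set.mem_compl_iff] at hf; tauto
      rw [hc e hce, h3.2 hs]; rfl
    · intro hs
      have hf : G.fst e ∈ X := by
        unfold Multigraph.crosses at hce
        simp only [Set.mem_compl_iff] at hs; tauto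
      rw [hc e hce, h3.1 hf]; rfl
  · intro e he
    exact (hnc e (fun hx => he ((crosses_compl G X e).2 hx))).symm
  · intro e he
    have hce : G.crosses X e := (crosses_compl G X e).1 he
    rcases crosses_some G hX hce with ⟨b, hb⟩
    rw [hb, hc e hce, hb]
    simp

lemma rtg_cutRev_symm {O O' : G.PartialOrientation}
    (h : Relation.ReflTransGen G.cutRev O O') : Relation.ReflTransGen G.cutRev O' O := by
  induction h with
  | refl => exact Relation.ReflTransGen.refl
  | tail _ hstep ih =>
    exact Relation.ReflTransGen.trans
      (Relation.ReflTransGen.single (cutRev_symm G hstep)) ih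

lemma cutRev_none {O O' : G.PartialOrientation} (h : G.cutRev O O') (e : G.E) :
    (O e = none ↔ O' e = none) := by
  rcases h with ⟨X, hX, hnc, hc⟩
  by_cases hce : G.crosses X e
  · rw [hc e hce]
    cases O e <;> simp
  · rw [hnc e hce]

lemma rtg_none {O O' : G.PartialOrientation}
    (h : Relation.ReflTransGen G.cutRev O O') (e : G.E) :
    (O e = none ↔ O' e = none) := by
  induction h with
  | refl => rfl
  | tail _ hstep ih => exact ih.trans (cutRev_none G hstep e)

/-- The potential-function invariant relating two orientations along cut reversals. -/
def Compat (O O' : G.PartialOrientation) (f : G.V → ℤ) : Prop :=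
  ∀ e, (O e = none → O' e = none ∧ f (G.fst e) = f (G.snd e)) ∧
    ∀ b, O e = some b →
      (f (G.dtail e b) = f (G.dhead e b) ∧ O' e = some b) ∨
      (f (G.dtail e b) = f (G.dhead e b) + 1 ∧ O' e = some (!b))

lemma exists_compat {O O' : G.PartialOrientation}
    (h : Relation.ReflTransGen G.cutRev O O') : ∃ f, Compat G O O' f := by
  induction h with
  | refl =>
    refine ⟨fun _ => 0, fun e => ⟨fun hn => ⟨hn, rfl⟩, fun b hb => Or.inl ⟨rfl, hb⟩⟩⟩
  | @tail O'' Ofin _ hstep ih =>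
    rcases ih with ⟨f, hf⟩
    rcases hstep with ⟨X, hX, hnc, hc⟩
    refine ⟨fun v => f v + (if v ∈ X then 1 else 0), fun e => ⟨?_, ?_⟩⟩
    · intro hn
      have h1 := (hf e).1 hn
      have hnotc : ¬ G.crosses X e := by
        intro hce
        rcases crosses_some G hX hce with ⟨b, hb⟩
        rw [h1.1] at hb; exact nomatch hb
      have hmem : (G.fst e ∈ X) ↔ (G.snd e ∈ X) := not_not.mp hnotc
      constructor
      · rw [hnc e hnotc, h1.1]
      · by_cases hx : G.fst e ∈ X
        · simp [hx, hmem.mp hx, h1.2]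
        · have hs : G.snd e ∉ X := fun hs => hx (hmem.mpr hs)
          simp [hx, hs, h1.2]
    · intro b hb
      have h2 := (hf e).2 b hb
      by_cases hce : G.crosses X e
      · -- e crosses X; O'' orients it out of X
        have hdir := hX.2 e hce
        have hne : ¬ ((G.fst e ∈ X) ↔ (G.snd e ∈ X)) := hce
        rcases h2 with ⟨hd, hsame⟩ | ⟨hd, hflip⟩
        · -- O'' e = some b, oriented out of X at time of reversal
          right
          have hrev : Ofin e = some (!b) := by
            rw [hc e hce, hsame]; rfl
          refine ⟨?_, hrev⟩
          -- tail of (e,b) is in X, head not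
          have : G.dtail e b ∈ X ∧ G.dhead e b ∉ X := by
            cases b with
            | true =>
              simp only [Multigraph.dtail, Multigraph.dhead, if_pos rfl] at *
              by_cases hx : G.fst e ∈ X
              · exact ⟨hx, fun hs => hne ⟨fun _ => hs, fun _ => hx⟩⟩
              · exfalso
                have hs : G.snd e ∈ X := by tauto
                have := hdir.2 hs
                rw [hsame] at this
                exact Bool.noConfusion (Option.some.inj this)
            | false =>
              simp only [Multigraph.dtail, Multigraph.dhead] at *
              by_cases hx : G.snd e ∈ X
              · exact ⟨by simpa using hx, by simp; exact fun hs => hne ⟨fun _ => hx, fun _ => hs⟩⟩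
              · exfalso
                have hs : G.fst e ∈ X := by tauto
                have := hdir.1 hs
                rw [hsame] at this
                exact Bool.noConfusion (Option.some.inj this)
          rcases this with ⟨ht, hh⟩
          simp [ht, hh, hd]
        · -- O'' e = some (!b), i.e. head-of-b side is the tail now; head of (e,!b)=tail of (e,b)
          left
          have hrev : Ofin e = some b := by
            rw [hc e hce, hflip]; simp
          refine ⟨?_, hrev⟩
          have : G.dhead e b ∈ X ∧ G.dtail e b ∉ X := by
            cases b with
            | true =>
              simp only [Multigraph.dtail, Multigraph.dhead, if_pos rfl] at *
              by_cases hx : G.snd e ∈ X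
              · exact ⟨hx, fun hs => hne ⟨fun _ => hx, fun _ => hs⟩⟩
              · exfalso
                have hs : G.fst e ∈ X := by tauto
                have := hdir.1 hs
                rw [hflip] at this
                exact Bool.noConfusion (Option.some.inj this)
            | false =>
              simp only [Multigraph.dtail, Multigraph.dhead] at *
              by_cases hx : G.fst e ∈ X
              · exact ⟨by simpa using hx, by simp; exact fun hs => hne ⟨fun _ => hs, fun _ => hx⟩⟩
              · exfalso
                have hs : G.snd e ∈ X := by tauto
                have := hdir.2 hs
                rw [hflip] at this
                exact Bool.noConfusion (Option.some.inj this)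
          rcases this with ⟨ht, hh⟩
          simp only [if_pos ht, if_neg hh]
          omega
      · -- not crossing: membership same, orientation unchanged
        have hmem : (G.fst e ∈ X) ↔ (G.snd e ∈ X) := not_not.mp hce
        have hmem' : (G.dtail e b ∈ X) ↔ (G.dhead e b ∈ X) := by
          cases b <;> simp [Multigraph.dtail, Multigraph.dhead] <;> tauto
        have hsame : Ofin e = O'' e := hnc e hce
        rcases h2 with ⟨hd, h⟩ | ⟨hd, h⟩
        · left
          refine ⟨?_, by rw [hsame, h]⟩
          by_cases hx : G.dtail e b ∈ X
          · have := hmem'.mp hx; simp only [if_pos hx, if_pos this, hd]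
          · have : G.dhead e b ∉ X := fun hh => hx (hmem'.mpr hh)
            simp only [if_neg hx, if_neg this, hd]
        · right
          refine ⟨?_, by rw [hsame, h]⟩
          by_cases hx : G.dtail e b ∈ X
          · have := hmem'.mp hx; simp only [if_pos hx, if_pos this, hd]
          · have : G.dhead e b ∉ X := fun hh => hx (hmem'.mpr hh)
            simp only [if_neg hx, if_neg this, hd]; ring

lemma compat_flip {O O' : G.PartialOrientation} {f : G.V → ℤ}
    (hf : Compat G O O' f) {e : G.E} (hne : O e ≠ O' e) :
    ∃ b, O e = some b ∧ f (G.dtail e b) = f (G.dhead e b) + 1 ∧ O' e = some (!b) := by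
  cases hOe : O e with
  | none => exact absurd (((hf e).1 hOe).1 ▸ hOe) hne
  | some b =>
    rcases (hf e).2 b hOe with ⟨hd, hsame⟩ | ⟨hd, hflip⟩
    · exact absurd (hOe.trans hsame.symm) hne
    · exact ⟨b, rfl, hd, hflip⟩

lemma compat_cross {O O' : G.PartialOrientation} {f : G.V → ℤ}
    (hf : Compat G O O' f) {t : ℤ} {e : G.E} (hc : G.crosses {v | t ≤ f v} e) :
    ∃ b, O e = some b ∧ f (G.dtail e b) = t ∧ f (G.dhead e b) = t - 1 ∧ O' e = some (!b) := by
  have hc' : ¬ (t ≤ f (G.fst e) ↔ t ≤ f (G.snd e)) := hc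
  cases hOe : O e with
  | none =>
    have := ((hf e).1 hOe).2
    exact absurd (iff_of_eq (congrArg (t ≤ ·) this)) hc'
  | some b =>
    rcases (hf e).2 b hOe with ⟨hd, _⟩ | ⟨hd, hflip⟩
    · exfalso
      apply hc'
      revert hd
      cases b <;> simp [Multigraph.dtail, Multigraph.dhead] <;> omega
    · refine ⟨b, rfl, ?_, ?_, hflip⟩ <;>
      · revert hd
        cases b <;> simp [Multigraph.dtail, Multigraph.dhead] <;> omega

lemma cross_level {O O' : G.PartialOrientation} {f : G.V → ℤ}
    (hf : Compat G O O' f) {e : G.E} {b : Bool} (hOe : O e = some b)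
    (hd : f (G.dtail e b) = f (G.dhead e b) + 1) :
    G.crosses {v | f (G.dtail e b) ≤ f v} e := by
  show ¬ _
  revert hd
  cases b <;> simp [Multigraph.dtail, Multigraph.dhead, Multigraph.crosses, Set.mem_setOf_eq] <;> omega

lemma decomp {O O' : G.PartialOrientation}
    (h : Relation.ReflTransGen G.cutRev O O') :
    ∃ l : List (Set G.V), (∀ X ∈ l, G.IsDirCut O X) ∧
      l.Pairwise (fun X Y => ∀ e, G.crosses X e → ¬ G.crosses Y e) ∧
      ∀ e, (O e ≠ O' e ↔ ∃ X ∈ l, G.crosses X e) := by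
  classical
  rcases exists_compat G h with ⟨f, hf⟩
  set T : Finset ℤ :=
    (Finset.univ.filter (fun e => O e ≠ O' e)).image
      (fun e => max (f (G.fst e)) (f (G.snd e))) with hT
  have hmaxval : ∀ {e : G.E} {b : Bool}, O e = some b →
      f (G.dtail e b) = f (G.dhead e b) + 1 →
      max (f (G.fst e)) (f (G.snd e)) = f (G.dtail e b) := by
    intro e b hOe hd
    revert hd
    cases b <;> simp [Multigraph.dtail, Multigraph.dhead] <;> omega
  refine ⟨T.toList.map (fun t => {v | t ≤ f v}), ?_, ?_, ?_⟩
  · intro X hX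
    rcases List.mem_map.mp hX with ⟨t, htT, rfl⟩
    have htT' : t ∈ T := (Finset.mem_toList).1 htT
    rcases Finset.mem_image.mp htT' with ⟨e, hemem, hte⟩
    have hne : O e ≠ O' e := (Finset.mem_filter.mp hemem).2
    rcases compat_flip G hf hne with ⟨b, hOe, hd, _⟩
    have ht : t = f (G.dtail e b) := by rw [← hte, hmaxval hOe hd]
    constructor
    · exact ⟨e, ht ▸ cross_level G hf hOe hd⟩
    · intro e' hce'
      rcases compat_cross G hf hce' with ⟨b', hOe', hdt, hdh, _⟩
      constructor
      · intro hfst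
        have hfst' : t ≤ f (G.fst e') := hfst
        cases b' with
        | true => exact hOe'
        | false =>
          exfalso
          simp [Multigraph.dtail, Multigraph.dhead] at hdt hdh
          omega
      · intro hsnd
        have hsnd' : t ≤ f (G.snd e') := hsnd
        cases b' with
        | false => exact hOe'
        | true =>
          exfalso
          simp [Multigraph.dtail, Multigraph.dhead] at hdt hdh
          omega
  · have hnd : T.toList.Nodup := Finset.nodup_toList T
    have hpw : T.toList.Pairwise (· ≠ ·) := hnd
    refine List.pairwise_map.mpr (hpw.imp ?_)
    intro t t' hne e hce hce'
    rcases compat_cross G hf hce with ⟨b, hOe, hdt, _, _⟩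
    rcases compat_cross G hf hce' with ⟨b', hOe', hdt', _, _⟩
    have hb : b = b' := Option.some.inj (hOe.symm.trans hOe')
    exact hne (hdt.symm.trans (hb ▸ hdt'))
  · intro e
    constructor
    · intro hne
      rcases compat_flip G hf hne with ⟨b, hOe, hd, _⟩
      set t := f (G.dtail e b) with ht
      have htT : t ∈ T := by
        apply Finset.mem_image.mpr
        exact ⟨e, Finset.mem_filter.mpr ⟨Finset.mem_univ _, hne⟩, hmaxval hOe hd⟩
      exact ⟨{v | t ≤ f v}, List.mem_map.mpr ⟨t, (Finset.mem_toList).2 htT, rfl⟩,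
        cross_level G hf hOe hd⟩
    · rintro ⟨X, hXl, hce⟩
      rcases List.mem_map.mp hXl with ⟨t, _, rfl⟩
      rcases compat_cross G hf hce with ⟨b, hOe, _, _, hflip⟩
      rw [hOe, hflip]
      simp

section Ordered

variable [LinearOrder G.E]

def rankOf (e : G.E) : ℕ := (Finset.univ.filter (fun f => e < f)).card

lemma rankOf_lt {e e' : G.E} (h : e < e') : rankOf G e' < rankOf G e := by
  classical
  apply Finset.card_lt_card
  refine ⟨fun g hg => ?_, fun hsub => ?_⟩
  · simp only [Finset.mem_filter, Finset.mem_univ, true_and] at hg ⊢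
    exact h.trans hg
  · have he' : e' ∈ Finset.univ.filter (fun f => e < f) := by simp [h]
    have := hsub he'
    simp at this

lemma sum_pow_lt {e : G.E} (S : Finset G.E) (hS : ∀ f ∈ S, e < f) :
    ∑ f ∈ S, 2 ^ rankOf G f < 2 ^ rankOf G e := by
  classical
  have hinj : ∀ x ∈ S, ∀ y ∈ S, rankOf G x = rankOf G y → x = y := by
    intro x _ y _ hxy
    by_contra hne
    rcases lt_or_gt_of_ne hne with h | h
    · exact absurd hxy (Nat.ne_of_gt (rankOf_lt G h))
    · exact absurd hxy (Nat.ne_of_lt (rankOf_lt G h))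
  have h1 : ∑ f ∈ S, 2 ^ rankOf G f = ∑ j ∈ S.image (rankOf G), 2 ^ j :=
    (Finset.sum_image (fun x hx y hy hxy => hinj x hx y hy hxy)).symm
  have h2 : S.image (rankOf G) ⊆ Finset.range (rankOf G e) := by
    intro j hj
    rcases Finset.mem_image.mp hj with ⟨g, hg, rfl⟩
    exact Finset.mem_range.mpr (rankOf_lt G (hS g hg))
  have h3 : ∀ n : ℕ, ∑ j ∈ Finset.range n, 2 ^ j = 2 ^ n - 1 := by
    intro n
    induction n with
    | zero => simp
    | succ n ih =>
      rw [Finset.sum_range_succ, ih]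
      have : (1:ℕ) ≤ 2 ^ n := Nat.one_le_two_pow
      omega
  calc ∑ f ∈ S, 2 ^ rankOf G f = ∑ j ∈ S.image (rankOf G), 2 ^ j := h1
    _ ≤ ∑ j ∈ Finset.range (rankOf G e), 2 ^ j :=
        Finset.sum_le_sum_of_subset h2
    _ = 2 ^ rankOf G e - 1 := h3 _
    _ < 2 ^ rankOf G e := by
        have : (1:ℕ) ≤ 2 ^ rankOf G e := Nat.one_le_two_pow
        omega

def Phi (A : G.E → Bool) (O : G.PartialOrientation) : ℕ :=
  ∑ e ∈ Finset.univ.filter (fun e => O e = some (!A e)), 2 ^ rankOf G e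

lemma exists_cutMin (A : G.E → Bool) (O : G.PartialOrientation) :
    ∃ O', Relation.ReflTransGen G.cutRev O O' ∧ G.CutMinimal A O' := by
  classical
  have hP : ∃ n, ∃ O', Relation.ReflTransGen G.cutRev O O' ∧ Phi G A O' = n :=
    ⟨Phi G A O, O, Relation.ReflTransGen.refl, rfl⟩
  obtain ⟨O', hO', hPhi⟩ := Nat.find_spec hP
  refine ⟨O', hO', ?_⟩
  intro X hX
  by_contra hmin
  have hcne : (Finset.univ.filter (fun e => G.crosses X e)).Nonempty := by
    rcases hX.1 with ⟨e, he⟩; exact ⟨e, by simp [he]⟩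
  set e := Finset.min' _ hcne with he_def
  have hecross : G.crosses X e := by
    have := Finset.min'_mem _ hcne
    simpa using this
  have hemin : ∀ e', G.crosses X e' → e ≤ e' := fun e' h' =>
    Finset.min'_le _ _ (by simp [h'])
  rcases crosses_some G hX hecross with ⟨b, hb⟩
  have hbval : b = !A e := by
    by_contra hbb
    apply hmin
    refine ⟨e, hecross, hemin, ?_⟩
    rw [hb]
    congr 1
    revert hbb; cases b <;> cases A e <;> simp
  set O'' : G.PartialOrientation :=
    fun g => if G.crosses X g then (O' g).map not else O' g with hO''def
  have hstep : G.cutRev O' O'' :=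
    ⟨X, hX, fun g hg => by simp [hO''def, hg], fun g hg => by simp [hO''def, hg]⟩
  have hrtg : Relation.ReflTransGen G.cutRev O O'' := hO'.tail hstep
  -- Phi decreases
  set B' := Finset.univ.filter (fun g => O' g = some (!A g)) with hB'
  set B'' := Finset.univ.filter (fun g => O'' g = some (!A g)) with hB''
  set D := Finset.univ.filter (fun g => G.crosses X g ∧ e < g) with hD
  have heB' : e ∈ B' := by simp [hB', hb, hbval]
  have heB'' : e ∉ B'' := by
    simp only [hB'', Finset.mem_filter, Finset.mem_univ, true_and, hO''def, if_pos hecross,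
      hb, hbval]
    cases A e <;> simp
  have hsub : B'' ⊆ (B'.erase e) ∪ D := by
    intro g hg
    have hgmem : O'' g = some (!A g) := (Finset.mem_filter.mp hg).2
    by_cases hcg : G.crosses X g
    · have hgne : g ≠ e := fun hge => heB'' (hge ▸ hg)
      have : e < g := lt_of_le_of_ne (hemin g hcg) (Ne.symm hgne)
      exact Finset.mem_union_right _ (by simp [hD, hcg, this])
    · have : O' g = some (!A g) := by
        rw [← hgmem, hO''def]; simp [hcg]
      have hgB' : g ∈ B' := by simp [hB', this]
      have hgne : g ≠ e := by
        intro hge; subst hge; exact hcg hecross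
      exact Finset.mem_union_left _ (Finset.mem_erase.mpr ⟨hgne, hgB'⟩)
  have hDlt : ∑ g ∈ D, 2 ^ rankOf G g < 2 ^ rankOf G e := by
    apply sum_pow_lt
    intro g hg
    exact ((Finset.mem_filter.mp hg).2).2
  have hlt : Phi G A O'' < Phi G A O' := by
    have h1 : Phi G A O'' ≤ ∑ g ∈ (B'.erase e) ∪ D, 2 ^ rankOf G g :=
      Finset.sum_le_sum_of_subset hsub
    have h2 : ∑ g ∈ (B'.erase e) ∪ D, 2 ^ rankOf G g ≤
        ∑ g ∈ B'.erase e, 2 ^ rankOf G g + ∑ g ∈ D, 2 ^ rankOf G g := by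
      classical
      calc ∑ g ∈ (B'.erase e) ∪ D, 2 ^ rankOf G g
          ≤ ∑ g ∈ (B'.erase e) ∪ (D \ B'.erase e), 2 ^ rankOf G g :=
            Finset.sum_le_sum_of_subset (by
              intro g hg
              rcases Finset.mem_union.mp hg with h | h
              · exact Finset.mem_union_left _ h
              · by_cases hgB : g ∈ B'.erase e
                · exact Finset.mem_union_left _ hgB
                · exact Finset.mem_union_right _ (Finset.mem_sdiff.mpr ⟨h, hgB⟩))
        _ = ∑ g ∈ B'.erase e, 2 ^ rankOf G g + ∑ g ∈ D \ B'.erase e, 2 ^ rankOf G g :=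
            Finset.sum_union (Finset.disjoint_sdiff)
        _ ≤ ∑ g ∈ B'.erase e, 2 ^ rankOf G g + ∑ g ∈ D, 2 ^ rankOf G g := by
            have hsd : ∑ g ∈ D \ B'.erase e, 2 ^ rankOf G g ≤ ∑ g ∈ D, 2 ^ rankOf G g :=
              Finset.sum_le_sum_of_subset Finset.sdiff_subset
            omega
    have h3 : ∑ g ∈ B'.erase e, 2 ^ rankOf G g + 2 ^ rankOf G e = Phi G A O' :=
      Finset.sum_erase_add _ _ heB'
    calc Phi G A O'' ≤ _ := h1
      _ ≤ _ := h2
      _ < ∑ g ∈ B'.erase e, 2 ^ rankOf G g + 2 ^ rankOf G e := by omega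
      _ = Phi G A O' := h3
  have := Nat.find_min hP (m := Phi G A O'') (by omega)
  exact this ⟨O'', hrtg, rfl⟩

lemma cutMin_unique (A : G.E → Bool) {O1 O2 : G.PartialOrientation}
    (h12 : Relation.ReflTransGen G.cutRev O1 O2)
    (h1 : G.CutMinimal A O1) (h2 : G.CutMinimal A O2) : O1 = O2 := by
  rcases decomp G h12 with ⟨l, hcuts, _, hiff⟩
  have hnone := rtg_none G h12
  have hempty : ∀ X ∈ l, False := by
    intro X hXl
    have hXcut := hcuts X hXl
    have hflip : ∀ e, G.crosses X e → ∃ b, O1 e = some b ∧ O2 e = some (!b) := by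
      intro e hce
      rcases crosses_some G hXcut hce with ⟨b, hb⟩
      have hne : O1 e ≠ O2 e := (hiff e).2 ⟨X, hXl, hce⟩
      cases h2e : O2 e with
      | none =>
        exfalso
        have : O1 e = none := (hnone e).2 h2e
        rw [hb] at this
        exact nomatch this
      | some b' =>
        refine ⟨b, hb, ?_⟩
        have hbne : b' ≠ b := fun hbe => hne (by rw [hb, h2e, hbe])
        have : b' = !b := by revert hbne; cases b <;> cases b' <;> simp
        rw [this]
    have hXc : G.IsDirCut O2 Xᶜ := by
      constructor
      · rcases hXcut.1 with ⟨e, he⟩; exact ⟨e, (crosses_compl G X e).2 he⟩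
      · intro e he
        have hce := (crosses_compl G X e).1 he
        rcases hflip e hce with ⟨b, hb1, hb2⟩
        have hcemem : ¬ ((G.fst e ∈ X) ↔ (G.snd e ∈ X)) := hce
        constructor
        · intro hfst
          have hfst' : G.fst e ∉ X := hfst
          have hsnd : G.snd e ∈ X := by tauto
          have h1e : O1 e = some false := (hXcut.2 e hce).2 hsnd
          rw [hb1] at h1e
          have : b = false := Option.some.inj h1e
          rw [hb2, this]; rfl
        · intro hsnd
          have hsnd' : G.snd e ∉ X := hsnd
          have hfst : G.fst e ∈ X := by tauto
          have h1e : O1 e = some true := (hXcut.2 e hce).1 hfst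
          rw [hb1] at h1e
          have : b = true := Option.some.inj h1e
          rw [hb2, this]; rfl
    rcases h1 X hXcut with ⟨e1, hc1, hm1, ha1⟩
    rcases h2 Xᶜ hXc with ⟨e2, hc2, hm2, ha2⟩
    have hc2' := (crosses_compl G X e2).1 hc2
    have he12 : e1 = e2 :=
      le_antisymm (hm1 e2 hc2') (hm2 e1 ((crosses_compl G X e1).2 hc1))
    subst he12
    rcases hflip e1 hc1 with ⟨b, hb1, hb2⟩
    rw [ha1] at hb1
    have hbA : b = A e1 := (Option.some.inj hb1).symm
    rw [ha2, hbA] at hb2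
    have := Option.some.inj hb2
    simp at this
  funext e
  by_contra hne
  rcases (hiff e).1 hne with ⟨X, hXl, _⟩
  exact hempty X hXl

end Ordered

end Stmt7Aux

/-- partial orientations related by directed cut reversals differ on a
disjoint union of directed cuts of the first; consequently every equivalence class modulo
cut reversals contains exactly one cut minimal partial orientation. -/
theorem stmt7 (G : Multigraph) [LinearOrder G.E] (A : G.E → Bool) (hG : G.Connected) :
    (∀ O O' : G.PartialOrientation, (∀ e, O e = none ↔ O' e = none) →
      Relation.ReflTransGen G.cutRev O O' →
      ∃ l : List (Set G.V), (∀ X ∈ l, G.IsDirCut O X) ∧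
        l.Pairwise (fun X Y => ∀ e, G.crosses X e → ¬ G.crosses Y e) ∧
        ∀ e, (O e ≠ O' e ↔ ∃ X ∈ l, G.crosses X e)) ∧
    (∀ O : G.PartialOrientation,
      ∃! O', Relation.ReflTransGen G.cutRev O O' ∧ G.CutMinimal A O') := by
  constructor
  · intro O O' _ h
    exact decomp G h
  · intro O
    obtain ⟨O', h1, h2⟩ := exists_cutMin G A O
    refine ⟨O', ⟨h1, h2⟩, ?_⟩
    rintro y ⟨hy1, hy2⟩
    exact cutMin_unique G A ((rtg_cutRev_symm G hy1).trans h1) hy2 h2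
end
end
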